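/- Let $(T^c(V),d)$ and $(T^c(W),d)$ be differential graded tensor coalgebras whose differentials have linear parts $d_1$ preserving $V$ resp. $W$, and let $f\colon T^c(V)\to T^c(W)$ be a coalgebra morphism written $f=f_0+f_1+\cdots$ with $f_i((T^c)^r(V))\subset (T^c)^{r-i}(W)$. If $f_0\colon(V,d_1)\to(W,d_1)$ is a quasi-isomorphism and $V,W$ are graded vector spaces over $\mathbb Q$, then $f$ is a quasi-isomorphism. -/

import Mathlib

/-- The bracket... the word-length `n` piece `V^{⊗n}` of the tensor coalgebra
`T^c(V)`, realised inside the tensor algebra. -/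
noncomputable def lenPiece (V : Type) [AddCommGroup V] [Module ℚ V] (n : ℕ) :
    Submodule ℚ (TensorAlgebra ℚ V) :=
  (LinearMap.range (TensorAlgebra.ι ℚ : V →ₗ[ℚ] TensorAlgebra ℚ V)) ^ n

/-- The word-length filtration `(T^c)^{≤ q}(V)` of the tensor coalgebra. -/
noncomputable def lenFilt (V : Type) [AddCommGroup V] [Module ℚ V] (q : ℕ) :
    Submodule ℚ (TensorAlgebra ℚ V) :=
  ⨆ n : ℕ, ⨆ _ : n ≤ q, lenPiece V n


namespace TCQI
open TensorAlgebra

variable {M N : Type} [AddCommGroup M] [Module ℚ M] [AddCommGroup N] [Module ℚ N]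

lemma piece_zero : lenPiece M 0 = 1 := pow_zero _

lemma piece_succ (n : ℕ) :
    lenPiece M (n + 1) =
      LinearMap.range (ι ℚ : M →ₗ[ℚ] TensorAlgebra ℚ M) * lenPiece M n := by
  simp [lenPiece, pow_succ']

lemma one_mem_piece_zero : (1 : TensorAlgebra ℚ M) ∈ lenPiece M 0 := by
  rw [piece_zero]; exact Submodule.one_le.mp le_rfl

lemma ι_mul_mem_piece {n : ℕ} (v : M) {x : TensorAlgebra ℚ M} (hx : x ∈ lenPiece M n) :
    ι ℚ v * x ∈ lenPiece M (n + 1) := by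
  rw [piece_succ]
  exact Submodule.mul_mem_mul (LinearMap.mem_range_self _ v) hx

lemma piece_le_filt {n q : ℕ} (h : n ≤ q) : lenPiece M n ≤ lenFilt M q :=
  le_iSup_of_le n (le_iSup_of_le h le_rfl)

lemma filt_le {q : ℕ} {S : Submodule ℚ (TensorAlgebra ℚ M)}
    (h : ∀ n ≤ q, lenPiece M n ≤ S) : lenFilt M q ≤ S :=
  iSup_le fun n => iSup_le fun hn => h n hn

lemma filt_mono {q q' : ℕ} (h : q ≤ q') : lenFilt M q ≤ lenFilt M q' :=
  filt_le fun n hn => piece_le_filt (hn.trans h)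

lemma filt_zero : lenFilt M 0 = lenPiece M 0 := by
  apply le_antisymm (filt_le fun n hn => by simp [Nat.le_zero.mp hn]) (piece_le_filt le_rfl)

lemma filt_succ (q : ℕ) : lenFilt M (q + 1) = lenFilt M q ⊔ lenPiece M (q + 1) := by
  apply le_antisymm
  · apply filt_le
    intro n hn
    rcases Nat.lt_or_ge n (q+1) with h | h
    · exact le_trans (piece_le_filt (Nat.lt_succ_iff.mp h)) le_sup_left
    · have : n = q + 1 := le_antisymm hn h
      subst this; exact le_sup_right
  · exact sup_le (filt_mono (Nat.le_succ q)) (piece_le_filt le_rfl)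

/-- the internal grading of the tensor algebra -/
lemma isInternal_piece :
    DirectSum.IsInternal (fun n => lenPiece M n) := by
  have := DirectSum.Decomposition.isInternal
    (ℳ := ((LinearMap.range (ι ℚ : M →ₗ[ℚ] TensorAlgebra ℚ M) ^ ·) : ℕ → Submodule ℚ _))
  exact this

lemma piece_disjoint_filt (q : ℕ) :
    lenPiece M (q + 1) ⊓ lenFilt M q = ⊥ := by
  have hind := (isInternal_piece (M := M)).submodule_iSupIndep
  have hd : Disjoint (lenPiece M (q + 1)) (⨆ (n : ℕ) (_ : n ≠ q + 1), lenPiece M n) :=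
    hind (q + 1)
  have hle : lenFilt M q ≤ ⨆ (n : ℕ) (_ : n ≠ q + 1), lenPiece M n := by
    apply filt_le
    intro n hn
    exact le_iSup_of_le n (le_iSup_of_le (by omega) le_rfl)
  exact disjoint_iff.mp (hd.mono_right hle)

open scoped Classical in
lemma exists_mem_filt (x : TensorAlgebra ℚ M) : ∃ q, x ∈ lenFilt M q := by
  classical
  set ℳ : ℕ → Submodule ℚ (TensorAlgebra ℚ M) :=
    ((LinearMap.range (ι ℚ : M →ₗ[ℚ] TensorAlgebra ℚ M) ^ ·) : ℕ → Submodule ℚ _) with hℳ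
  have hx : x = ∑ i ∈ (DirectSum.decompose ℳ x).support,
      ((DirectSum.decompose ℳ x) i : TensorAlgebra ℚ M) :=
    (DirectSum.sum_support_decompose ℳ x).symm
  by_cases hs : (DirectSum.decompose ℳ x).support.Nonempty
  · obtain ⟨q, hq⟩ := (DirectSum.decompose ℳ x).support.exists_max_image id hs
    refine ⟨q, ?_⟩
    rw [hx]
    apply Submodule.sum_mem
    intro i hi
    exact piece_le_filt (hq.2 i hi) ((DirectSum.decompose ℳ x) i).2
  · refine ⟨0, ?_⟩
    rw [hx, Finset.not_nonempty_iff_eq_empty.mp hs]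
    simp

/-- induction principle: submodules containing 1 and stable under left
multiplication by `ι v` are everything -/
lemma top_induction (S : Submodule ℚ (TensorAlgebra ℚ M)) (h1 : (1 : TensorAlgebra ℚ M) ∈ S)
    (hstep : ∀ (v : M) x, x ∈ S → ι ℚ v * x ∈ S) : ∀ x, x ∈ S := by
  have hpiece : ∀ n, lenPiece M n ≤ S := by
    intro n
    induction n with
    | zero =>
      rw [piece_zero]
      intro x hx
      obtain ⟨r, hr⟩ := Submodule.mem_one.mp hx
      rw [← hr, Algebra.algebraMap_eq_smul_one]
      exact S.smul_mem r h1
    | succ n ih =>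
      rw [piece_succ]
      intro x hx
      refine Submodule.mul_induction_on hx ?_ ?_
      · rintro m ⟨v, rfl⟩ y hy
        exact hstep v y (ih hy)
      · intro a b ha hb; exact S.add_mem ha hb
  intro x
  obtain ⟨q, hq⟩ := exists_mem_filt x
  exact filt_le (fun n _ => hpiece n) hq

lemma ext_by_gen {N' : Type*} [AddCommGroup N'] [Module ℚ N']
    {L R : TensorAlgebra ℚ M →ₗ[ℚ] N'}
    (h1 : L 1 = R 1)
    (hstep : ∀ (v : M) x, L x = R x → L (ι ℚ v * x) = R (ι ℚ v * x)) : L = R := by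
  have : ∀ x, x ∈ LinearMap.ker (L - R) := by
    apply top_induction
    · simpa [LinearMap.mem_ker, sub_eq_zero] using h1
    · intro v x hx
      simp only [LinearMap.mem_ker, LinearMap.sub_apply, sub_eq_zero] at hx ⊢
      exact hstep v x hx
  ext x
  have := this x
  simpa [LinearMap.mem_ker, sub_eq_zero] using this


/-- algebra morphism of tensor algebras induced by a linear map -/
noncomputable def ahom (g : M →ₗ[ℚ] N) : TensorAlgebra ℚ M →ₐ[ℚ] TensorAlgebra ℚ N :=
  TensorAlgebra.lift ℚ ((ι ℚ : N →ₗ[ℚ] TensorAlgebra ℚ N) ∘ₗ g)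

lemma ahom_ι (g : M →ₗ[ℚ] N) (v : M) : ahom g (ι ℚ v) = ι ℚ (g v) := by
  simp [ahom]

lemma ahom_ι_mul (g : M →ₗ[ℚ] N) (v : M) (x : TensorAlgebra ℚ M) :
    ahom g (ι ℚ v * x) = ι ℚ (g v) * ahom g x := by
  rw [map_mul, ahom_ι]

variable (A B : M →ₗ[ℚ] M)

noncomputable def derM : M →ₗ[ℚ] Matrix (Fin 2) (Fin 2) (TensorAlgebra ℚ M) where
  toFun v := Matrix.of ![![ι ℚ v, 0], ![ι ℚ (A v), ι ℚ (B v)]]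
  map_add' x y := by
    funext i j
    fin_cases i <;> fin_cases j <;>
      simp [Matrix.of_apply]
  map_smul' c x := by
    funext i j
    fin_cases i <;> fin_cases j <;>
      simp [Matrix.of_apply]

noncomputable def derΦ : TensorAlgebra ℚ M →ₐ[ℚ] Matrix (Fin 2) (Fin 2) (TensorAlgebra ℚ M) :=
  TensorAlgebra.lift ℚ (derM A B)

noncomputable def der : TensorAlgebra ℚ M →ₗ[ℚ] TensorAlgebra ℚ M where
  toFun x := derΦ A B x 1 0
  map_add' x y := by simp only [map_add]; rfl
  map_smul' c x := by simp only [map_smul]; rfl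

lemma derΦ_apply_ι (v : M) : derΦ A B (ι ℚ v) = derM A B v := by
  simp [derΦ]

lemma derΦ_diag (x : TensorAlgebra ℚ M) :
    derΦ A B x 0 0 = x ∧ derΦ A B x 0 1 = 0 ∧ derΦ A B x 1 1 = ahom B x := by
  induction x using TensorAlgebra.induction with
  | algebraMap r =>
    rw [AlgHom.commutes, AlgHom.commutes, Matrix.algebraMap_eq_diagonal]
    refine ⟨?_, ?_, ?_⟩ <;> simp [Matrix.diagonal]
  | ι v =>
    rw [derΦ_apply_ι, ahom_ι]
    refine ⟨rfl, rfl, rfl⟩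
  | mul x y hx hy =>
    obtain ⟨hx00, hx01, hx11⟩ := hx
    obtain ⟨hy00, hy01, hy11⟩ := hy
    rw [map_mul, map_mul]
    refine ⟨?_, ?_, ?_⟩ <;>
      · rw [Matrix.mul_apply, Fin.sum_univ_two]
        simp [hx00, hx01, hx11, hy00, hy01, hy11]
  | add x y hx hy =>
    obtain ⟨hx00, hx01, hx11⟩ := hx
    obtain ⟨hy00, hy01, hy11⟩ := hy
    rw [map_add, map_add]
    refine ⟨?_, ?_, ?_⟩ <;> simp [Matrix.add_apply, hx00, hx01, hx11, hy00, hy01, hy11]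

lemma der_one : der A B 1 = 0 := by
  show derΦ A B 1 1 0 = 0
  rw [map_one]
  simp [Matrix.one_apply]

lemma der_ι_mul (v : M) (x : TensorAlgebra ℚ M) :
    der A B (ι ℚ v * x) = ι ℚ (A v) * x + ι ℚ (B v) * der A B x := by
  show derΦ A B (ι ℚ v * x) 1 0 = _
  rw [map_mul, derΦ_apply_ι]
  rw [Matrix.mul_apply, Fin.sum_univ_two]
  have h00 := (derΦ_diag A B x).1
  show derM A B v 1 0 * derΦ A B x 0 0 + derM A B v 1 1 * derΦ A B x 1 0 = _
  rw [h00]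
  rfl

lemma der_ι (v : M) : der A B (ι ℚ v) = ι ℚ (A v) := by
  have := der_ι_mul A B v 1
  rw [mul_one, der_one, mul_zero, add_zero, mul_one] at this
  exact this


section Part3
variable (A B : M →ₗ[ℚ] M)

lemma der_mem_piece (n : ℕ) : ∀ x ∈ lenPiece M n, der A B x ∈ lenPiece M n := by
  induction n with
  | zero =>
    intro x hx
    rw [piece_zero] at hx
    obtain ⟨r, hr⟩ := Submodule.mem_one.mp hx
    rw [← hr, Algebra.algebraMap_eq_smul_one, map_smul, der_one, smul_zero]
    exact Submodule.zero_mem _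
  | succ n ih =>
    intro x hx
    rw [piece_succ] at hx
    refine Submodule.mul_induction_on hx ?_ ?_
    · rintro m ⟨v, rfl⟩ y hy
      rw [der_ι_mul]
      exact Submodule.add_mem _ (ι_mul_mem_piece (A v) hy) (ι_mul_mem_piece (B v) (ih _ hy))
    · intro a b ha hb
      rw [map_add]; exact Submodule.add_mem _ ha hb

lemma ahom_mem_piece (g : M →ₗ[ℚ] N) (n : ℕ) :
    ∀ x ∈ lenPiece M n, ahom g x ∈ lenPiece N n := by
  induction n with
  | zero =>
    intro x hx
    rw [piece_zero] at hx
    obtain ⟨r, hr⟩ := Submodule.mem_one.mp hx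
    rw [← hr, Algebra.algebraMap_eq_smul_one, map_smul, map_one]
    rw [piece_zero]
    exact Submodule.smul_mem _ _ (Submodule.one_le.mp le_rfl)
  | succ n ih =>
    intro x hx
    rw [piece_succ] at hx
    refine Submodule.mul_induction_on hx ?_ ?_
    · rintro m ⟨v, rfl⟩ y hy
      rw [ahom_ι_mul]
      exact ι_mul_mem_piece _ (ih _ hy)
    · intro a b ha hb
      rw [map_add]; exact Submodule.add_mem _ ha hb

/-- products of `ι`'s of a `Fin`-indexed family -/
noncomputable def prodFn {n : ℕ} (v : Fin n → M) : TensorAlgebra ℚ M :=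
  (List.ofFn fun i => ι ℚ (v i)).prod

lemma prodFn_zero (v : Fin 0 → M) : prodFn v = 1 := by simp [prodFn]

lemma prodFn_succ {n : ℕ} (v : Fin (n + 1) → M) :
    prodFn v = ι ℚ (v 0) * prodFn (Fin.tail v) := by
  rw [prodFn, List.ofFn_succ, List.prod_cons]; rfl

lemma prodFn_cons {n : ℕ} (a : M) (v : Fin n → M) :
    prodFn (Fin.cons a v) = ι ℚ a * prodFn v := by
  rw [prodFn_succ]
  simp [Fin.tail_cons]

lemma prodFn_mem_piece {n : ℕ} (v : Fin n → M) : prodFn v ∈ lenPiece M n := by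
  induction n with
  | zero => rw [prodFn_zero]; exact one_mem_piece_zero
  | succ n ih =>
    rw [prodFn_succ]
    exact ι_mul_mem_piece _ (ih _)

lemma piece_le_span_words {κ : Type*} (b : Module.Basis κ ℚ M) (n : ℕ) :
    lenPiece M n ≤ Submodule.span ℚ {x | ∃ w : Fin n → κ, x = prodFn (fun i => b (w i))} := by
  induction n with
  | zero =>
    rw [piece_zero]
    intro x hx
    obtain ⟨r, hr⟩ := Submodule.mem_one.mp hx
    rw [← hr, Algebra.algebraMap_eq_smul_one]
    refine Submodule.smul_mem _ _ (Submodule.subset_span ?_)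
    exact ⟨Fin.elim0, by rw [prodFn_zero]⟩
  | succ n ih =>
    rw [piece_succ]
    rw [Submodule.mul_le]
    rintro m ⟨v, rfl⟩ y hy
    have hy' := ih hy
    -- reduce to y a word via span induction
    refine Submodule.span_induction ?_ ?_ ?_ ?_ hy'
    · rintro z ⟨w, rfl⟩
      -- reduce v to basis elements
      have hv : v ∈ (⊤ : Submodule ℚ M) := Submodule.mem_top
      rw [← b.span_eq] at hv
      refine Submodule.span_induction ?_ ?_ ?_ ?_ hv
      · rintro u ⟨j, rfl⟩
        refine Submodule.subset_span ⟨Fin.cons j w, ?_⟩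
        have hfun : (fun i : Fin (n+1) => b ((Fin.cons j w : Fin (n+1) → κ) i))
            = (Fin.cons (b j) (fun i => b (w i)) : Fin (n+1) → M) := by
          funext i
          refine Fin.cases ?_ ?_ i <;> simp
        rw [hfun, prodFn_cons]
      · rw [map_zero, zero_mul]; exact Submodule.zero_mem _
      · intro u u' _ _ hu hu'
        rw [map_add, add_mul]; exact Submodule.add_mem _ hu hu'
      · intro c u _ hu
        rw [map_smul, smul_mul_assoc]; exact Submodule.smul_mem _ _ hu
    · rw [mul_zero]; exact Submodule.zero_mem _
    · intro z z' _ _ hz hz'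
      rw [mul_add]; exact Submodule.add_mem _ hz hz'
    · intro c z _ hz
      rw [mul_smul_comm]; exact Submodule.smul_mem _ _ hz

lemma negOnePow_natAbs (a : ℤ) :
    ((-1 : ℚ)) ^ a.natAbs = if Even a then 1 else -1 := by
  by_cases h : Even a
  · rw [if_pos h]
    exact Even.neg_one_pow (Int.natAbs_even.mpr h)
  · rw [if_neg h]
    exact Odd.neg_one_pow (Int.natAbs_odd.mpr (Int.not_even_iff_odd.mp h))

lemma negOnePow_natAbs_add (a b : ℤ) :
    ((-1 : ℚ)) ^ (a + b).natAbs = (-1) ^ a.natAbs * (-1) ^ b.natAbs := by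
  by_cases ha : Even a <;> by_cases hb : Even b <;>
    simp [negOnePow_natAbs, Int.even_add, ha, hb]

lemma filter_lt_succ_sum {n : ℕ} (deg : Fin (n + 1) → ℤ) (i : Fin n) :
    (∑ j ∈ Finset.univ.filter (fun j => j < i.succ), deg j)
      = deg 0 + ∑ j ∈ Finset.univ.filter (fun j => j < i), Fin.tail deg j := by
  rw [Finset.sum_filter, Finset.sum_filter, Fin.sum_univ_succ, if_pos i.succ_pos]
  congr 1
  apply Finset.sum_congr rfl
  intro j _
  by_cases h : j < i
  · rw [if_pos (by simpa [Fin.succ_lt_succ_iff] using h), if_pos h]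
    rfl
  · rw [if_neg (by simpa [Fin.succ_lt_succ_iff] using h), if_neg h]

/-- the Koszul-sign formula for `der d ε` on products of eigenvectors of `ε` -/
lemma der_prodFn (d ε : M →ₗ[ℚ] M) :
    ∀ (n : ℕ) (v : Fin n → M) (deg : Fin n → ℤ),
    (∀ i, ε (v i) = ((-1 : ℚ) ^ (deg i).natAbs) • v i) →
    der d ε (prodFn v) =
      ∑ i : Fin n,
        ((-1 : ℚ) ^ (∑ j ∈ Finset.univ.filter (fun j => j < i), deg j).natAbs) •
          prodFn (fun j => if j = i then d (v j) else v j) := by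
  intro n
  induction n with
  | zero =>
    intro v deg _
    rw [prodFn_zero, der_one]
    simp
  | succ n ih =>
    intro v deg hv
    have h0term : prodFn (fun j : Fin (n+1) => if j = 0 then d (v j) else v j)
        = ι ℚ (d (v 0)) * prodFn (Fin.tail v) := by
      have harg : (Fin.tail fun j : Fin (n+1) => if j = 0 then d (v j) else v j)
          = Fin.tail v := by
        funext j
        simp [Fin.tail, Fin.succ_ne_zero]
      rw [prodFn_succ, harg]
      norm_num
    have hfil : (Finset.univ.filter (fun j : Fin (n+1) => j < 0)) = ∅ := by
      apply Finset.filter_false_of_mem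
      intro j _
      exact Fin.not_lt_zero j
    rw [prodFn_succ, der_ι_mul, hv 0, map_smul, smul_mul_assoc]
    have htail := ih (Fin.tail v) (Fin.tail deg) (fun i => hv i.succ)
    rw [htail, Fin.sum_univ_succ, hfil, Finset.sum_empty]
    have hz : ((-1 : ℚ) ^ (0 : ℤ).natAbs) = 1 := by norm_num
    rw [hz, one_smul, h0term]
    congr 1
    rw [Finset.mul_sum, Finset.smul_sum]
    apply Finset.sum_congr rfl
    intro i _
    have hYterm : prodFn (fun j : Fin (n+1) => if j = i.succ then d (v j) else v j)
        = ι ℚ (v 0) *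
          prodFn (fun j : Fin n => if j = i then d (Fin.tail v j) else Fin.tail v j) := by
      have harg : (Fin.tail fun j : Fin (n+1) => if j = i.succ then d (v j) else v j)
          = (fun j : Fin n => if j = i then d (Fin.tail v j) else Fin.tail v j) := by
        funext j
        simp [Fin.tail, Fin.succ_inj]
      rw [prodFn_succ, harg, if_neg (Ne.symm (Fin.succ_ne_zero i))]
    rw [filter_lt_succ_sum deg i, negOnePow_natAbs_add, hYterm, mul_smul_comm, smul_smul]

end Part3

section Part4

variable (ε : M →ₗ[ℚ] M)

lemma exists_inv_compl (hε2 : ∀ x, ε (ε x) = x) (S T : Submodule ℚ M) (hST : S ≤ T)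
    (hS : ∀ x ∈ S, ε x ∈ S) (hT : ∀ x ∈ T, ε x ∈ T) :
    ∃ U : Submodule ℚ M, U ≤ T ∧ (∀ x ∈ U, ε x ∈ U) ∧ S ⊓ U = ⊥ ∧ S ⊔ U = T := by
  classical
  set Mp : Submodule ℚ M := LinearMap.ker (ε - LinearMap.id) with hMp
  set Mm : Submodule ℚ M := LinearMap.ker (ε + LinearMap.id) with hMm
  have hmemp : ∀ x : M, x ∈ Mp ↔ ε x = x := by
    intro x; simp [hMp, LinearMap.mem_ker, sub_eq_zero]
  have hmemm : ∀ x : M, x ∈ Mm ↔ ε x = -x := by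
    intro x
    simp only [hMm, LinearMap.mem_ker, LinearMap.add_apply, LinearMap.id_apply]
    constructor
    · intro h; linear_combination (norm := module) h
    · intro h; rw [h]; abel
  have hsplit : ∀ x : M, x = (2⁻¹ : ℚ) • (x + ε x) + (2⁻¹ : ℚ) • (x - ε x) := by
    intro x; match_scalars <;> norm_num
  have hsplitp : ∀ x : M, (2⁻¹ : ℚ) • (x + ε x) ∈ Mp := by
    intro x
    rw [hmemp, map_smul, map_add, hε2]
    rw [add_comm (ε x) x]
  have hsplitm : ∀ x : M, (2⁻¹ : ℚ) • (x - ε x) ∈ Mm := by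
    intro x
    rw [hmemm, map_smul, map_sub, hε2, ← smul_neg]
    congr 1
    abel
  have hPM : Mp ⊓ Mm = ⊥ := by
    rw [eq_bot_iff]
    intro x hx
    obtain ⟨hx1, hx2⟩ := Submodule.mem_inf.mp hx
    rw [Submodule.mem_bot]
    rw [hmemp] at hx1
    rw [hmemm] at hx2
    have h3 : x = -x := hx1.symm.trans hx2
    have h4 : (2 : ℚ) • x = 0 := by
      rw [two_smul]
      nth_rewrite 2 [h3]
      exact add_neg_cancel x
    have h5 := congrArg (fun y => (2⁻¹ : ℚ) • y) h4
    simpa [smul_smul, (by norm_num : (2⁻¹ * 2 : ℚ) = 1)] using h5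
  -- a submodule stable under ε splits
  have hsplitS : ∀ (S' : Submodule ℚ M), (∀ x ∈ S', ε x ∈ S') →
      (S' ⊓ Mp) ⊔ (S' ⊓ Mm) = S' := by
    intro S' hS'
    apply le_antisymm (sup_le inf_le_left inf_le_left)
    intro x hx
    rw [hsplit x]
    apply Submodule.add_mem
    · exact Submodule.mem_sup_left (Submodule.mem_inf.mpr
        ⟨S'.smul_mem _ (S'.add_mem hx (hS' x hx)), hsplitp x⟩)
    · exact Submodule.mem_sup_right (Submodule.mem_inf.mpr
        ⟨S'.smul_mem _ (S'.sub_mem hx (hS' x hx)), hsplitm x⟩)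
  obtain ⟨Cp, hCp⟩ := Submodule.exists_isCompl (S ⊓ Mp)
  obtain ⟨Cm, hCm⟩ := Submodule.exists_isCompl (S ⊓ Mm)
  set Up : Submodule ℚ M := Cp ⊓ (T ⊓ Mp) with hUp
  set Um : Submodule ℚ M := Cm ⊓ (T ⊓ Mm) with hUm
  have hsupp : (S ⊓ Mp) ⊔ Up = T ⊓ Mp := by
    rw [hUp, ← sup_inf_assoc_of_le Cp (inf_le_inf hST le_rfl), hCp.sup_eq_top, top_inf_eq]
  have hsupm : (S ⊓ Mm) ⊔ Um = T ⊓ Mm := by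
    rw [hUm, ← sup_inf_assoc_of_le Cm (inf_le_inf hST le_rfl), hCm.sup_eq_top, top_inf_eq]
  refine ⟨Up ⊔ Um, ?_, ?_, ?_, ?_⟩
  · exact sup_le (le_trans inf_le_right inf_le_left) (le_trans inf_le_right inf_le_left)
  · intro x hx
    obtain ⟨a, ha, b, hb, rfl⟩ := Submodule.mem_sup.mp hx
    have hap : ε a = a := (hmemp a).mp (Submodule.mem_inf.mp (Submodule.mem_inf.mp ha).2).2
    have hbm : ε b = -b := (hmemm b).mp (Submodule.mem_inf.mp (Submodule.mem_inf.mp hb).2).2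
    rw [map_add, hap, hbm]
    exact Submodule.add_mem _ (Submodule.mem_sup_left ha)
      (Submodule.mem_sup_right (Submodule.neg_mem _ hb))
  · rw [eq_bot_iff]
    intro x hx
    obtain ⟨hxS, hxU⟩ := Submodule.mem_inf.mp hx
    rw [Submodule.mem_bot]
    obtain ⟨a, ha, b, hb, hab⟩ := Submodule.mem_sup.mp hxU
    have hxp : (2⁻¹ : ℚ) • (x + ε x) ∈ S ⊓ Mp :=
      Submodule.mem_inf.mpr ⟨S.smul_mem _ (S.add_mem hxS (hS x hxS)), hsplitp x⟩
    have hxm : (2⁻¹ : ℚ) • (x - ε x) ∈ S ⊓ Mm :=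
      Submodule.mem_inf.mpr ⟨S.smul_mem _ (S.sub_mem hxS (hS x hxS)), hsplitm x⟩
    -- uniqueness of eigen decomposition
    have hap : ε a = a := (hmemp a).mp (Submodule.mem_inf.mp (Submodule.mem_inf.mp ha).2).2
    have hbm : ε b = -b := (hmemm b).mp (Submodule.mem_inf.mp (Submodule.mem_inf.mp hb).2).2
    have hεx : ε x = a - b := by rw [← hab, map_add, hap, hbm]; abel
    have hxa : (2⁻¹ : ℚ) • (x + ε x) = a := by
      rw [hεx, ← hab]
      match_scalars <;> norm_num
    have hxb : (2⁻¹ : ℚ) • (x - ε x) = b := by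
      rw [hεx, ← hab]
      match_scalars <;> norm_num
    have ha0 : a = 0 := by
      have : a ∈ (S ⊓ Mp) ⊓ Cp :=
        Submodule.mem_inf.mpr ⟨hxa ▸ hxp, (Submodule.mem_inf.mp ha).1⟩
      rw [hCp.inf_eq_bot] at this
      exact this
    have hb0 : b = 0 := by
      have : b ∈ (S ⊓ Mm) ⊓ Cm :=
        Submodule.mem_inf.mpr ⟨hxb ▸ hxm, (Submodule.mem_inf.mp hb).1⟩
      rw [hCm.inf_eq_bot] at this
      exact this
    rw [← hab, ha0, hb0, add_zero]
  · rw [← hsplitS T hT, ← hsplitS S hS]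
    rw [sup_sup_sup_comm, hsupp, hsupm]

end Part4

section Part5

lemma exists_projections (d ε : M →ₗ[ℚ] M) (hd2 : ∀ x, d (d x) = 0)
    (hε2 : ∀ x, ε (ε x) = x) (hεd : ∀ x, ε (d x) + d (ε x) = 0) :
    ∃ (p k : M →ₗ[ℚ] M) (H : Submodule ℚ M),
      (∀ x, d (p x) = 0) ∧ (∀ x, p (d x) = 0) ∧ (∀ x, p (p x) = p x) ∧
      (∀ x, ε (p x) = p (ε x)) ∧
      (∀ x, d (k x) + k (d x) + p x = x) ∧
      (∀ x, ε (k x) + k (ε x) = 0) ∧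
      (∀ x, p x ∈ H) ∧ (∀ x ∈ H, p x = x) ∧
      (∀ x ∈ H, d x = 0) ∧ (∀ x ∈ H, (∃ u, x = d u) → x = 0) ∧
      (∀ x, d x = 0 → ∃ u, x - p x = d u) := by
  classical
  set Z : Submodule ℚ M := LinearMap.ker d with hZdef
  set Bd : Submodule ℚ M := LinearMap.range d with hBdef
  have hmemZ : ∀ x : M, x ∈ Z ↔ d x = 0 := fun x => LinearMap.mem_ker
  have hBZ : Bd ≤ Z := by
    rintro x ⟨u, rfl⟩
    exact (hmemZ _).mpr (hd2 u)
  have hdε : ∀ x, d (ε x) = -ε (d x) := fun x => eq_neg_of_add_eq_zero_right (hεd x)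
  have hεd' : ∀ x, ε (d x) = -d (ε x) := fun x => eq_neg_of_add_eq_zero_left (hεd x)
  have hεZ : ∀ x ∈ Z, ε x ∈ Z := by
    intro x hx
    rw [hmemZ] at hx ⊢
    rw [hdε, hx, map_zero, neg_zero]
  have hεB : ∀ x ∈ Bd, ε x ∈ Bd := by
    rintro x ⟨u, rfl⟩
    exact ⟨-ε u, by rw [map_neg, hεd']⟩
  obtain ⟨H, hHZ, hHinv, hBHbot, hBHsup⟩ := exists_inv_compl ε hε2 Bd Z hBZ hεB hεZ
  obtain ⟨C, _, hCinv, hZCbot, hZCsup⟩ :=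
    exists_inv_compl ε hε2 Z ⊤ le_top hεZ (fun x _ => Submodule.mem_top)
  have hdH : ∀ x ∈ H, d x = 0 := fun x hx => (hmemZ x).mp (hHZ hx)
  have hcompl1 : IsCompl H (Bd ⊔ C) := by
    constructor
    · rw [disjoint_iff, eq_bot_iff]
      intro x hx
      obtain ⟨hxH, hxBC⟩ := Submodule.mem_inf.mp hx
      obtain ⟨b, hb, c, hc, hbc⟩ := Submodule.mem_sup.mp hxBC
      have hcZ : c ∈ Z := by
        have : c = x - b := by rw [← hbc]; abel
        rw [this]
        exact Z.sub_mem (hHZ hxH) (hBZ hb)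
      have hc0 : c = 0 := by
        have : c ∈ Z ⊓ C := Submodule.mem_inf.mpr ⟨hcZ, hc⟩
        rw [hZCbot] at this
        exact this
      have hxb : x = b := by rw [← hbc, hc0, add_zero]
      have : x ∈ Bd ⊓ H := Submodule.mem_inf.mpr ⟨hxb ▸ hb, hxH⟩
      rw [hBHbot] at this
      exact this
    · rw [codisjoint_iff, ← sup_assoc, sup_comm H Bd, hBHsup, hZCsup]
  have hcompl2 : IsCompl Bd (H ⊔ C) := by
    constructor
    · rw [disjoint_iff, eq_bot_iff]
      intro x hx
      obtain ⟨hxB, hxHC⟩ := Submodule.mem_inf.mp hx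
      obtain ⟨h, hh, c, hc, hhc⟩ := Submodule.mem_sup.mp hxHC
      have hcZ : c ∈ Z := by
        have : c = x - h := by rw [← hhc]; abel
        rw [this]
        exact Z.sub_mem (hBZ hxB) (hHZ hh)
      have hc0 : c = 0 := by
        have : c ∈ Z ⊓ C := Submodule.mem_inf.mpr ⟨hcZ, hc⟩
        rw [hZCbot] at this
        exact this
      have hxh : x = h := by rw [← hhc, hc0, add_zero]
      have : x ∈ Bd ⊓ H := Submodule.mem_inf.mpr ⟨hxB, hxh ▸ hh⟩
      rw [hBHbot] at this
      exact this
    · rw [codisjoint_iff, ← sup_assoc, hBHsup, hZCsup]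
  set projH := Submodule.linearProjOfIsCompl H (Bd ⊔ C) hcompl1 with hprojH
  set p : M →ₗ[ℚ] M := H.subtype ∘ₗ projH with hpdef
  set projB := Submodule.linearProjOfIsCompl Bd (H ⊔ C) hcompl2 with hprojB
  set dC : C →ₗ[ℚ] Bd :=
    LinearMap.codRestrict Bd (d ∘ₗ C.subtype) (fun c => ⟨c, rfl⟩) with hdCdef
  have hdC_coe : ∀ x : C, (dC x : M) = d (x : M) := fun x => rfl
  have hdC_bij : Function.Bijective dC := by
    constructor
    · intro x y hxy
      have hx : d ((x : M) - (y : M)) = 0 := by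
        rw [map_sub, ← hdC_coe, ← hdC_coe, hxy, sub_self]
      have : ((x : M) - (y : M)) ∈ Z ⊓ C :=
        Submodule.mem_inf.mpr ⟨(hmemZ _).mpr hx, C.sub_mem x.2 y.2⟩
      rw [hZCbot] at this
      exact Subtype.ext (sub_eq_zero.mp this)
    · rintro ⟨b, u, rfl⟩
      have hu : u ∈ Z ⊔ C := by rw [hZCsup]; exact Submodule.mem_top
      obtain ⟨z, hz, c, hc, hzc⟩ := Submodule.mem_sup.mp hu
      refine ⟨⟨c, hc⟩, ?_⟩
      apply Subtype.ext
      rw [hdC_coe]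
      show d c = d u
      rw [← hzc, map_add, (hmemZ z).mp hz, zero_add]
  set e := LinearEquiv.ofBijective dC hdC_bij with hedef
  have he_coe : ∀ x : C, (e x : M) = d (x : M) := fun x => rfl
  set k : M →ₗ[ℚ] M := C.subtype ∘ₗ (e.symm : Bd →ₗ[ℚ] C) ∘ₗ projB with hkdef
  -- evaluation lemmas
  have hpH : ∀ x ∈ H, p x = x := by
    intro x hx
    show (projH x : M) = x
    have : projH x = ⟨x, hx⟩ := Submodule.linearProjOfIsCompl_apply_left hcompl1 ⟨x, hx⟩
    rw [this]
  have hpBC : ∀ x ∈ Bd ⊔ C, p x = 0 := by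
    intro x hx
    show (projH x : M) = 0
    rw [show projH x = 0 from Submodule.projectionOnto_apply_of_mem_right hcompl1 hx]
    rfl
  have hp_memH : ∀ x, p x ∈ H := fun x => (projH x).2
  have hp_eval : ∀ (h b c : M), h ∈ H → b ∈ Bd → c ∈ C → p (h + b + c) = h := by
    intro h b c hh hb hc
    rw [map_add, map_add, hpH h hh, hpBC b (Submodule.mem_sup_left hb),
      hpBC c (Submodule.mem_sup_right hc), add_zero, add_zero]
  have hprojB_H : ∀ x ∈ H ⊔ C, projB x = 0 := fun x hx =>
    Submodule.projectionOnto_apply_of_mem_right hcompl2 hx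
  have hprojB_eval : ∀ (h b c : M) (hh : h ∈ H) (hb : b ∈ Bd) (hc : c ∈ C),
      projB (h + b + c) = ⟨b, hb⟩ := by
    intro h b c hh hb hc
    rw [map_add, map_add, hprojB_H h (Submodule.mem_sup_left hh),
      hprojB_H c (Submodule.mem_sup_right hc),
      show projB b = ⟨b, hb⟩ from Submodule.projectionOnto_apply_of_mem_left hcompl2 hb, zero_add, add_zero]
  have hk_eval : ∀ (h b c : M) (hh : h ∈ H) (hb : b ∈ Bd) (hc : c ∈ C),
      k (h + b + c) = (e.symm ⟨b, hb⟩ : M) := by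
    intro h b c hh hb hc
    show (((e.symm : Bd →ₗ[ℚ] C) (projB (h + b + c))) : M) = _
    rw [hprojB_eval h b c hh hb hc]
    rfl
  have hd_esymm : ∀ (b : M) (hb : b ∈ Bd), d ((e.symm ⟨b, hb⟩ : C) : M) = b := by
    intro b hb
    have := e.apply_symm_apply ⟨b, hb⟩
    have hcoe := congrArg (fun y : Bd => (y : M)) this
    rw [← he_coe (e.symm ⟨b, hb⟩)] at *
    exact hcoe
  have he_symm_d : ∀ (c : M) (hc : c ∈ C) (hm : d c ∈ Bd),
      ((e.symm ⟨d c, hm⟩ : C) : M) = c := by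
    intro c hc hm
    have : (⟨d c, hm⟩ : Bd) = e ⟨c, hc⟩ := by
      apply Subtype.ext
      rw [he_coe]
    rw [this, e.symm_apply_apply]
  have hdec : ∀ x : M, ∃ h b c : M, h ∈ H ∧ b ∈ Bd ∧ c ∈ C ∧ x = h + b + c := by
    intro x
    have hx : x ∈ H ⊔ (Bd ⊔ C) := by rw [hcompl1.sup_eq_top]; exact Submodule.mem_top
    obtain ⟨h, hh, r, hr, hhr⟩ := Submodule.mem_sup.mp hx
    obtain ⟨b, hb, c, hc, hbc⟩ := Submodule.mem_sup.mp hr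
    exact ⟨h, b, c, hh, hb, hc, by rw [← hhr, ← hbc, add_assoc]⟩
  refine ⟨p, k, H, ?_, ?_, ?_, ?_, ?_, ?_, hp_memH, hpH, hdH, ?_, ?_⟩
  · intro x
    exact hdH _ (hp_memH x)
  · intro x
    exact hpBC (d x) (Submodule.mem_sup_left ⟨x, rfl⟩)
  · intro x
    exact hpH _ (hp_memH x)
  · -- ε p = p ε
    intro x
    obtain ⟨h, b, c, hh, hb, hc, rfl⟩ := hdec x
    rw [hp_eval h b c hh hb hc]
    have : ε (h + b + c) = ε h + ε b + ε c := by rw [map_add, map_add]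
    rw [this, hp_eval (ε h) (ε b) (ε c) (hHinv h hh) (hεB b hb) (hCinv c hc)]
  · -- d k + k d + p = 1
    intro x
    obtain ⟨h, b, c, hh, hb, hc, rfl⟩ := hdec x
    rw [hp_eval h b c hh hb hc, hk_eval h b c hh hb hc, hd_esymm b hb]
    have hdx : d (h + b + c) = d c := by
      rw [map_add, map_add, hdH h hh, (hmemZ b).mp (hBZ hb), zero_add, zero_add]
    rw [hdx]
    have h2 : k (d c) = ((e.symm ⟨d c, ⟨c, rfl⟩⟩ : C) : M) := by
      have h3 := hk_eval 0 (d c) 0 H.zero_mem ⟨c, rfl⟩ C.zero_mem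
      simpa using h3
    rw [h2, he_symm_d c hc ⟨c, rfl⟩]
    abel
  · -- ε k + k ε = 0
    intro x
    obtain ⟨h, b, c, hh, hb, hc, rfl⟩ := hdec x
    rw [hk_eval h b c hh hb hc]
    have hεx : ε (h + b + c) = ε h + ε b + ε c := by rw [map_add, map_add]
    rw [hεx, hk_eval (ε h) (ε b) (ε c) (hHinv h hh) (hεB b hb) (hCinv c hc)]
    -- show ε (e.symm b) + e.symm (ε b) = 0
    set c₀ : M := (e.symm ⟨b, hb⟩ : M) with hc₀
    have hc₀C : c₀ ∈ C := (e.symm ⟨b, hb⟩).2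
    have hdc₀ : d c₀ = b := hd_esymm b hb
    have key : (e.symm ⟨ε b, hεB b hb⟩ : M) = -ε c₀ := by
      have hmem : -ε c₀ ∈ C := C.neg_mem (hCinv c₀ hc₀C)
      have : (⟨ε b, hεB b hb⟩ : Bd) = e ⟨-ε c₀, hmem⟩ := by
        apply Subtype.ext
        rw [he_coe]
        show ε b = d (-ε c₀)
        rw [map_neg, hdε, hdc₀, neg_neg]
      rw [this, e.symm_apply_apply]
    rw [key]
    abel
  · -- H ∩ Bd = 0
    intro x hx hex
    obtain ⟨u, hu⟩ := hex
    have : x ∈ Bd ⊓ H := Submodule.mem_inf.mpr ⟨⟨u, hu.symm⟩, hx⟩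
    rw [hBHbot] at this
    exact this
  · -- cycles decompose
    intro x hx
    obtain ⟨h, b, c, hh, hb, hc, rfl⟩ := hdec x
    have hcZ : c ∈ Z := by
      have h1 : c = (h + b + c) - h - b := by abel
      rw [h1]
      exact Z.sub_mem (Z.sub_mem ((hmemZ _).mpr hx) (hHZ hh)) (hBZ hb)
    have hc0 : c = 0 := by
      have : c ∈ Z ⊓ C := Submodule.mem_inf.mpr ⟨hcZ, hc⟩
      rw [hZCbot] at this
      exact this
    have hpx : p (h + b + c) = h := hp_eval h b c hh hb hc
    obtain ⟨u, hu⟩ := hb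
    refine ⟨u, ?_⟩
    rw [hpx, hc0, ← hu]
    abel

end Part5

section Part6

lemma ahom_comp_apply {P : Type} [AddCommGroup P] [Module ℚ P]
    (g : N →ₗ[ℚ] P) (h : M →ₗ[ℚ] N) (X : TensorAlgebra ℚ M) :
    ahom g (ahom h X) = ahom (g ∘ₗ h) X := by
  have : (ahom g).comp (ahom h) = ahom (g ∘ₗ h) := by
    apply TensorAlgebra.hom_ext
    apply LinearMap.ext
    intro v
    simp [ahom]
  exact congrArg (fun F => F X) (congrArg (fun F => F.toFun) this)

lemma der_comp_ahom_eq_zero (d ε : M →ₗ[ℚ] M) (g : N →ₗ[ℚ] M)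
    (hdg : ∀ w, d (g w) = 0) (X : TensorAlgebra ℚ N) :
    der d ε (ahom g X) = 0 := by
  have hext : (der d ε) ∘ₗ (ahom g).toLinearMap = (0 : TensorAlgebra ℚ N →ₗ[ℚ] TensorAlgebra ℚ M) := by
    apply ext_by_gen
    · simp [der_one]
    · intro v x hx
      simp only [LinearMap.comp_apply, AlgHom.toLinearMap_apply, LinearMap.zero_apply] at hx ⊢
      rw [ahom_ι_mul, der_ι_mul, hdg, hx]
      simp
  exact congrArg (fun F => F X) hext

lemma ahom_comp_der_eq_zero (d ε : M →ₗ[ℚ] M) (p : M →ₗ[ℚ] N)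
    (hpd : ∀ x, p (d x) = 0) (X : TensorAlgebra ℚ M) :
    ahom p (der d ε X) = 0 := by
  have hext : (ahom p).toLinearMap ∘ₗ (der d ε) = (0 : TensorAlgebra ℚ M →ₗ[ℚ] TensorAlgebra ℚ N) := by
    apply ext_by_gen
    · simp [der_one]
    · intro v x hx
      simp only [LinearMap.comp_apply, AlgHom.toLinearMap_apply, LinearMap.zero_apply] at hx ⊢
      rw [der_ι_mul, map_add, ahom_ι_mul, ahom_ι_mul, hpd, hx]
      simp
  exact congrArg (fun F => F X) hext

lemma homotopy_id (d ε p k : M →ₗ[ℚ] M)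
    (hdp : ∀ x, d (p x) = 0) (hpd : ∀ x, p (d x) = 0)
    (hεp : ∀ x, ε (p x) = p (ε x)) (hε2 : ∀ x, ε (ε x) = x)
    (hεd : ∀ x, ε (d x) + d (ε x) = 0)
    (hdk : ∀ x, d (k x) + k (d x) + p x = x)
    (hεk : ∀ x, ε (k x) + k (ε x) = 0)
    (X : TensorAlgebra ℚ M) :
    der d ε (der k (ε ∘ₗ p) X) + der k (ε ∘ₗ p) (der d ε X) + ahom p X = X := by
  have hext : (der d ε) ∘ₗ (der k (ε ∘ₗ p)) + (der k (ε ∘ₗ p)) ∘ₗ (der d ε)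
      + (ahom p).toLinearMap = LinearMap.id := by
    apply ext_by_gen
    · simp [der_one]
    · intro v x hx
      simp only [LinearMap.add_apply, LinearMap.comp_apply, AlgHom.toLinearMap_apply,
        LinearMap.id_apply] at hx ⊢
      rw [der_ι_mul k (ε ∘ₗ p) v x, der_ι_mul d ε v x, ahom_ι_mul]
      rw [map_add, map_add]
      rw [der_ι_mul, der_ι_mul, der_ι_mul, der_ι_mul]
      simp only [LinearMap.comp_apply]
      -- vector-level identities
      have e1 : ε (k v) = -k (ε v) := eq_neg_of_add_eq_zero_left (hεk v)
      have e2 : d (ε (p v)) = 0 := by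
        have := eq_neg_of_add_eq_zero_right (hεd (p v))
        rw [this, hdp, map_zero, neg_zero]
      have e3 : ε (p (d v)) = 0 := by rw [hpd, map_zero]
      have e4 : ε (ε (p v)) = p v := hε2 _
      have e5 : ε (p (ε v)) = p v := by rw [hεp, hε2]
      have e6 : d (k v) = v - p v - k (d v) := by
        rw [eq_sub_iff_add_eq, eq_sub_iff_add_eq]
        exact hdk v
      have hsub : der d ε (der k (ε ∘ₗ p) x)
          = x - der k (ε ∘ₗ p) (der d ε x) - ahom p x := by
        rw [eq_sub_iff_add_eq, eq_sub_iff_add_eq]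
        rw [add_right_comm]
        exact hx
      rw [e1, e2, e3, e4, e5, e6, hsub]
      simp only [map_sub, map_neg, map_zero, sub_mul, neg_mul, zero_mul, mul_sub]
      abel
  exact congrArg (fun F => F X) hext

end Part6

section Part7

/-- contraction gadget: `contr α (ι v * x) = α v • x` -/
noncomputable def contrM (α : M →ₗ[ℚ] ℚ) :
    M →ₗ[ℚ] Matrix (Fin 2) (Fin 2) (TensorAlgebra ℚ M) where
  toFun v := Matrix.of ![![ι ℚ v, 0], ![algebraMap ℚ _ (α v), 0]]
  map_add' x y := by
    funext i j
    fin_cases i <;> fin_cases j <;> simp [Matrix.of_apply]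
  map_smul' c x := by
    funext i j
    fin_cases i <;> fin_cases j <;> simp [Matrix.of_apply, Algebra.algebraMap_eq_smul_one, mul_smul]

noncomputable def contrΦ (α : M →ₗ[ℚ] ℚ) :
    TensorAlgebra ℚ M →ₐ[ℚ] Matrix (Fin 2) (Fin 2) (TensorAlgebra ℚ M) :=
  TensorAlgebra.lift ℚ (contrM α)

noncomputable def contr (α : M →ₗ[ℚ] ℚ) :
    TensorAlgebra ℚ M →ₗ[ℚ] TensorAlgebra ℚ M where
  toFun x := contrΦ α x 1 0
  map_add' x y := by simp only [map_add]; rfl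
  map_smul' c x := by simp only [map_smul]; rfl

lemma contrΦ_diag (α : M →ₗ[ℚ] ℚ) (x : TensorAlgebra ℚ M) :
    contrΦ α x 0 0 = x ∧ contrΦ α x 0 1 = 0 := by
  induction x using TensorAlgebra.induction with
  | algebraMap r =>
    rw [AlgHom.commutes, Matrix.algebraMap_eq_diagonal]
    exact ⟨by simp [Matrix.diagonal], by simp [Matrix.diagonal]⟩
  | ι v =>
    have : contrΦ α (ι ℚ v) = contrM α v := by simp [contrΦ]
    rw [this]
    exact ⟨rfl, rfl⟩
  | mul x y hx hy =>
    rw [map_mul]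
    refine ⟨?_, ?_⟩ <;>
      · rw [Matrix.mul_apply, Fin.sum_univ_two]
        simp [hx.1, hx.2, hy.1, hy.2]
  | add x y hx hy =>
    rw [map_add]
    exact ⟨by simp [Matrix.add_apply, hx.1, hy.1], by simp [Matrix.add_apply, hx.2, hy.2]⟩

lemma contr_ι_mul (α : M →ₗ[ℚ] ℚ) (v : M) (x : TensorAlgebra ℚ M) :
    contr α (ι ℚ v * x) = α v • x := by
  show contrΦ α (ι ℚ v * x) 1 0 = α v • x
  rw [map_mul]
  have : contrΦ α (ι ℚ v) = contrM α v := by simp [contrΦ]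
  rw [this, Matrix.mul_apply, Fin.sum_univ_two]
  have h00 := (contrΦ_diag α x).1
  show contrM α v 1 0 * contrΦ α x 0 0 + contrM α v 1 1 * contrΦ α x 1 0 = α v • x
  rw [h00]
  show algebraMap ℚ _ (α v) * x + 0 * contrΦ α x 1 0 = α v • x
  rw [zero_mul, add_zero, Algebra.smul_def]

lemma exists_dual (a : M) (ha : a ≠ 0) : ∃ α : M →ₗ[ℚ] ℚ, α a = 1 := by
  obtain ⟨q, hq⟩ := Submodule.exists_isCompl (Submodule.span ℚ {a})
  set e := LinearEquiv.toSpanNonzeroSingleton ℚ M a ha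
  refine ⟨(e.symm : (Submodule.span ℚ {a}) →ₗ[ℚ] ℚ) ∘ₗ
    Submodule.linearProjOfIsCompl _ q hq, ?_⟩
  have h1 : Submodule.linearProjOfIsCompl _ q hq a
      = ⟨a, Submodule.mem_span_singleton_self a⟩ :=
    Submodule.linearProjOfIsCompl_apply_left hq ⟨a, Submodule.mem_span_singleton_self a⟩
  show (e.symm : (Submodule.span ℚ {a}) →ₗ[ℚ] ℚ) (Submodule.linearProjOfIsCompl _ q hq a) = 1
  rw [h1]
  have h2 : (⟨a, Submodule.mem_span_singleton_self a⟩ : Submodule.span ℚ {a}) = e 1 := by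
    apply Subtype.ext
    simp [e, LinearEquiv.toSpanNonzeroSingleton_one]
  rw [h2]
  exact e.symm_apply_apply 1

lemma pure_tensor_eq_zero {a c : M} (h : ι ℚ a * ι ℚ c = 0) : a = 0 ∨ c = 0 := by
  by_cases ha : a = 0
  · exact Or.inl ha
  · right
    obtain ⟨α, hα⟩ := exists_dual a ha
    have := congrArg (contr α) h
    rw [contr_ι_mul, hα, one_smul, map_zero] at this
    exact (TensorAlgebra.ι_eq_zero_iff ℚ c).mp this

/-- extension of filtration-stability from pieces to the filtration -/
lemma filt_stable {D : TensorAlgebra ℚ M →ₗ[ℚ] TensorAlgebra ℚ M}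
    (hDfilt : ∀ n, ∀ x ∈ lenPiece M n, D x ∈ lenFilt M n) :
    ∀ q, ∀ x ∈ lenFilt M q, D x ∈ lenFilt M q := by
  intro q
  have : lenFilt M q ≤ Submodule.comap D (lenFilt M q) := by
    apply filt_le
    intro n hn x hx
    exact Submodule.mem_comap.mpr ((filt_mono hn) (hDfilt n x hx))
  exact fun x hx => this hx

/-- choice of an adapted parity operator -/
lemma exists_eps (g : ℤ → Submodule ℚ M) (hg : (⨆ i, g i) = ⊤) (d : M →ₗ[ℚ] M)
    (D : TensorAlgebra ℚ M →ₗ[ℚ] TensorAlgebra ℚ M)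
    (hDgr : ∀ (n : ℕ) (v : Fin n → M) (deg : Fin n → ℤ),
      (∀ i, v i ∈ g (deg i)) →
      D ((List.ofFn fun i => ι ℚ (v i)).prod)
        - ∑ i : Fin n,
            ((-1 : ℚ) ^ (∑ j ∈ Finset.univ.filter (fun j => j < i), deg j).natAbs) •
              (List.ofFn fun j =>
                ι ℚ (if j = i then d (v j) else v j)).prod
        ∈ lenFilt M (n - 1)) :
    ∃ ε : M →ₗ[ℚ] M, (∀ x, ε (ε x) = x) ∧
      (∀ n, ∀ x ∈ lenPiece M n, D x - der d ε x ∈ lenFilt M (n - 1)) := by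
  classical
  set s : Set M := ⋃ i : ℤ, (g i : Set M) with hs
  have hspan : Submodule.span ℚ s = ⊤ := by
    rw [hs]
    rw [Submodule.span_iUnion]
    simp only [Submodule.span_eq]
    exact hg
  obtain ⟨bs, hbs, hspanb, hli⟩ := exists_linearIndependent ℚ s
  rw [hspan] at hspanb
  set B : Module.Basis bs ℚ M := Module.Basis.mk hli (by rw [Subtype.range_coe, hspanb]) with hB
  have hBapp : ∀ j : bs, B j = (j : M) := fun j => Module.Basis.mk_apply hli _ j
  have hdeg : ∀ j : bs, ∃ i : ℤ, (j : M) ∈ g i := by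
    intro j
    have := hbs j.2
    rw [hs] at this
    exact Set.mem_iUnion.mp this
  set deg : bs → ℤ := fun j => Classical.choose (hdeg j) with hdegdef
  have hdegmem : ∀ j : bs, (j : M) ∈ g (deg j) := fun j => Classical.choose_spec (hdeg j)
  set sgn : bs → ℚ := fun j => (-1 : ℚ) ^ (deg j).natAbs with hsgn
  set ε : M →ₗ[ℚ] M := B.constr ℚ (fun j => sgn j • (j : M)) with hε
  have hεB : ∀ j : bs, ε (B j) = sgn j • B j := by
    intro j
    rw [hε, Module.Basis.constr_basis, hBapp]
  have hsgn2 : ∀ j : bs, sgn j * sgn j = 1 := by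
    intro j
    rw [hsgn]
    rw [← pow_add]
    exact Even.neg_one_pow ⟨(deg j).natAbs, rfl⟩
  have hε2 : ∀ x, ε (ε x) = x := by
    have : ε ∘ₗ ε = LinearMap.id := by
      apply B.ext
      intro j
      rw [LinearMap.comp_apply, hεB, map_smul, hεB, smul_smul, hsgn2, one_smul,
        LinearMap.id_apply]
    intro x
    exact congrArg (fun F => F x) this
  refine ⟨ε, hε2, ?_⟩
  intro n x hx
  have hSsub : lenPiece M n ≤
      Submodule.comap (D - der d ε) (lenFilt M (n - 1)) := by
    refine le_trans (piece_le_span_words B n) ?_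
    rw [Submodule.span_le]
    rintro y ⟨w, rfl⟩
    rw [SetLike.mem_coe, Submodule.mem_comap, LinearMap.sub_apply]
    have heigen : ∀ i : Fin n, ε (B (w i))
        = ((-1 : ℚ) ^ (deg (w i)).natAbs) • B (w i) := fun i => hεB (w i)
    have hder := der_prodFn d ε n (fun i => B (w i)) (fun i => deg (w i))
      (fun i => heigen i)
    have hD := hDgr n (fun i => B (w i)) (fun i => deg (w i)) (fun i => by
      show B (w i) ∈ g (deg (w i))
      rw [hBapp]
      exact hdegmem (w i))
    simp only [prodFn] at hder ⊢
    rw [hder]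
    simpa using hD
  have := hSsub hx
  rw [Submodule.mem_comap, LinearMap.sub_apply] at this
  exact this

end Part7

section Part8

lemma ι_mem_piece_one (v : M) : ι ℚ v ∈ lenPiece M 1 := by
  rw [lenPiece, pow_one]
  exact ⟨v, rfl⟩

lemma der_der_ι_mul_ι (d ε : M →ₗ[ℚ] M) (hd2 : ∀ x, d (d x) = 0)
    (hε2 : ∀ x, ε (ε x) = x) (u w : M) :
    der d ε (der d ε (ι ℚ u * ι ℚ w)) = ι ℚ (ε (d u) + d (ε u)) * ι ℚ (d w) := by
  rw [der_ι_mul, der_ι, map_add, der_ι_mul, der_ι_mul, der_ι, der_ι, hd2, hd2, hε2]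
  simp only [map_zero, zero_mul, mul_zero, add_zero, zero_add, map_add, add_mul]

lemma eps_anticomm (d ε : M →ₗ[ℚ] M) (hd2 : ∀ x, d (d x) = 0) (hε2 : ∀ x, ε (ε x) = x)
    (D : TensorAlgebra ℚ M →ₗ[ℚ] TensorAlgebra ℚ M) (hD2 : ∀ x, D (D x) = 0)
    (hDfilt : ∀ n, ∀ x ∈ lenPiece M n, D x ∈ lenFilt M n)
    (hcomp : ∀ n, ∀ x ∈ lenPiece M n, D x - der d ε x ∈ lenFilt M (n - 1)) :
    ∀ x, ε (d x) + d (ε x) = 0 := by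
  by_cases hd : ∀ x : M, d x = 0
  · intro x
    rw [hd, hd, map_zero, add_zero]
  · push_neg at hd
    obtain ⟨w₀, hw₀⟩ := hd
    -- the square of `der d ε` vanishes on words of length 2
    have hAA : ∀ x ∈ lenPiece M 2, der d ε (der d ε x) = 0 := by
      intro x hx
      have h1 : der d ε x ∈ lenPiece M 2 := der_mem_piece d ε 2 x hx
      have h2 : D x - der d ε x ∈ lenFilt M 1 := hcomp 2 x hx
      have h3 : D (der d ε x) - der d ε (der d ε x) ∈ lenFilt M 1 := hcomp 2 _ h1
      have h4 : D (D x - der d ε x) ∈ lenFilt M 1 := filt_stable hDfilt 1 _ h2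
      have h5 : der d ε (der d ε x)
          = D (D x) - (D (der d ε x) - der d ε (der d ε x)) - D (D x - der d ε x) := by
        rw [map_sub]
        abel
      have h6 : der d ε (der d ε x) ∈ lenFilt M 1 := by
        rw [h5, hD2]
        exact Submodule.sub_mem _
          (Submodule.sub_mem _ (Submodule.zero_mem _) h3) h4
      have h7 : der d ε (der d ε x) ∈ lenPiece M 2 := der_mem_piece d ε 2 _ h1
      have h8 : der d ε (der d ε x) ∈ lenPiece M (1 + 1) ⊓ lenFilt M 1 :=
        Submodule.mem_inf.mpr ⟨h7, h6⟩
      rw [piece_disjoint_filt 1] at h8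
      exact h8
    intro u
    have hmem : ι ℚ u * ι ℚ w₀ ∈ lenPiece M 2 :=
      ι_mul_mem_piece u (ι_mem_piece_one w₀)
    have := hAA _ hmem
    rw [der_der_ι_mul_ι d ε hd2 hε2] at this
    rcases pure_tensor_eq_zero this with h | h
    · exact h
    · exact absurd h hw₀

lemma exists_side (g : ℤ → Submodule ℚ M) (hg : (⨆ i, g i) = ⊤) (d : M →ₗ[ℚ] M)
    (hd2 : ∀ x, d (d x) = 0)
    (D : TensorAlgebra ℚ M →ₗ[ℚ] TensorAlgebra ℚ M) (hD2 : ∀ x, D (D x) = 0)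
    (hDfilt : ∀ n, ∀ x ∈ lenPiece M n, D x ∈ lenFilt M n)
    (hDgr : ∀ (n : ℕ) (v : Fin n → M) (deg : Fin n → ℤ),
      (∀ i, v i ∈ g (deg i)) →
      D ((List.ofFn fun i => ι ℚ (v i)).prod)
        - ∑ i : Fin n,
            ((-1 : ℚ) ^ (∑ j ∈ Finset.univ.filter (fun j => j < i), deg j).natAbs) •
              (List.ofFn fun j =>
                ι ℚ (if j = i then d (v j) else v j)).prod
        ∈ lenFilt M (n - 1)) :
    ∃ (ε p k : M →ₗ[ℚ] M) (H : Submodule ℚ M),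
      (∀ x, ε (ε x) = x) ∧ (∀ x, ε (d x) + d (ε x) = 0) ∧
      (∀ n, ∀ x ∈ lenPiece M n, D x - der d ε x ∈ lenFilt M (n - 1)) ∧
      (∀ x, d (p x) = 0) ∧ (∀ x, p (d x) = 0) ∧ (∀ x, p (p x) = p x) ∧
      (∀ x, ε (p x) = p (ε x)) ∧
      (∀ x, d (k x) + k (d x) + p x = x) ∧
      (∀ x, ε (k x) + k (ε x) = 0) ∧
      (∀ x, p x ∈ H) ∧ (∀ x ∈ H, p x = x) ∧
      (∀ x ∈ H, d x = 0) ∧ (∀ x ∈ H, (∃ u, x = d u) → x = 0) ∧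
      (∀ x, d x = 0 → ∃ u, x - p x = d u) := by
  obtain ⟨ε, hε2, hcomp⟩ := exists_eps g hg d D hDgr
  have hεd := eps_anticomm d ε hd2 hε2 D hD2 hDfilt hcomp
  obtain ⟨p, k, H, h1, h2, h3, h4, h5, h6, h7, h8, h9, h10, h11⟩ :=
    exists_projections d ε hd2 hε2 hεd
  exact ⟨ε, p, k, H, hε2, hεd, hcomp, h1, h2, h3, h4, h5, h6, h7, h8, h9, h10, h11⟩

end Part8

section Part9

lemma filt_stable' {f : TensorAlgebra ℚ M →ₗ[ℚ] TensorAlgebra ℚ N}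
    (hf : ∀ n, ∀ x ∈ lenPiece M n, f x ∈ lenFilt N n) :
    ∀ q, ∀ x ∈ lenFilt M q, f x ∈ lenFilt N q := by
  intro q
  have : lenFilt M q ≤ Submodule.comap f (lenFilt N q) := by
    apply filt_le
    intro n hn x hx
    exact Submodule.mem_comap.mpr ((filt_mono hn) (hf n x hx))
  exact fun x hx => this hx

lemma der_piece_zero (A B : M →ₗ[ℚ] M) {x : TensorAlgebra ℚ M}
    (hx : x ∈ lenPiece M 0) : der A B x = 0 := by
  rw [piece_zero] at hx
  obtain ⟨r, hr⟩ := Submodule.mem_one.mp hx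
  rw [← hr, Algebra.algebraMap_eq_smul_one, map_smul, der_one, smul_zero]

/-- the length-preserving part of a filtered chain map is a chain map for the
length-preserving parts of the differentials -/
lemma chain_comp (dM εM : M →ₗ[ℚ] M) (dN εN : N →ₗ[ℚ] N) (f0 : M →ₗ[ℚ] N)
    (D : TensorAlgebra ℚ M →ₗ[ℚ] TensorAlgebra ℚ M)
    (D' : TensorAlgebra ℚ N →ₗ[ℚ] TensorAlgebra ℚ N)
    (f : TensorAlgebra ℚ M →ₗ[ℚ] TensorAlgebra ℚ N)
    (hD'filt : ∀ n, ∀ y ∈ lenPiece N n, D' y ∈ lenFilt N n)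
    (hcompM : ∀ n, ∀ x ∈ lenPiece M n, D x - der dM εM x ∈ lenFilt M (n - 1))
    (hcompN : ∀ n, ∀ y ∈ lenPiece N n, D' y - der dN εN y ∈ lenFilt N (n - 1))
    (hcompf : ∀ n, ∀ x ∈ lenPiece M n, f x - ahom f0 x ∈ lenFilt N (n - 1))
    (hffilt : ∀ n, ∀ x ∈ lenPiece M n, f x ∈ lenFilt N n)
    (hfchain : ∀ x, D' (f x) = f (D x)) :
    ∀ n, ∀ x ∈ lenPiece M n, ahom f0 (der dM εM x) = der dN εN (ahom f0 x) := by
  intro n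
  match n with
  | 0 =>
    intro x hx
    rw [der_piece_zero _ _ hx, map_zero,
      der_piece_zero _ _ (ahom_mem_piece f0 0 x hx)]
  | (m + 1) =>
    intro x hx
    have hAx : der dM εM x ∈ lenPiece M (m + 1) := der_mem_piece _ _ _ x hx
    have hFx : ahom f0 x ∈ lenPiece N (m + 1) := ahom_mem_piece f0 _ x hx
    have h1 : f (D x) - ahom f0 (der dM εM x) ∈ lenFilt N m := by
      have hr : D x - der dM εM x ∈ lenFilt M m := hcompM (m + 1) x hx
      have h2 : f (D x - der dM εM x) ∈ lenFilt N m := filt_stable' hffilt m _ hr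
      have h3 : f (der dM εM x) - ahom f0 (der dM εM x) ∈ lenFilt N m :=
        hcompf (m + 1) _ hAx
      have : f (D x) - ahom f0 (der dM εM x)
          = f (D x - der dM εM x) + (f (der dM εM x) - ahom f0 (der dM εM x)) := by
        rw [map_sub]
        abel
      rw [this]
      exact Submodule.add_mem _ h2 h3
    have h4 : D' (f x) - der dN εN (ahom f0 x) ∈ lenFilt N m := by
      have ht : f x - ahom f0 x ∈ lenFilt N m := hcompf (m + 1) x hx
      have h5 : D' (f x - ahom f0 x) ∈ lenFilt N m := filt_stable hD'filt m _ ht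
      have h6 : D' (ahom f0 x) - der dN εN (ahom f0 x) ∈ lenFilt N m :=
        hcompN (m + 1) _ hFx
      have : D' (f x) - der dN εN (ahom f0 x)
          = D' (f x - ahom f0 x) + (D' (ahom f0 x) - der dN εN (ahom f0 x)) := by
        rw [map_sub]
        abel
      rw [this]
      exact Submodule.add_mem _ h5 h6
    have hdiff : der dN εN (ahom f0 x) - ahom f0 (der dM εM x) ∈ lenFilt N m := by
      have : der dN εN (ahom f0 x) - ahom f0 (der dM εM x)
          = (f (D x) - ahom f0 (der dM εM x)) - (D' (f x) - der dN εN (ahom f0 x))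
            + (D' (f x) - f (D x)) := by
        abel
      have heq0 : D' (f x) - f (D x) = 0 := by rw [hfchain, sub_self]
      rw [this, heq0, add_zero]
      exact Submodule.sub_mem _ h1 h4
    have hmem : der dN εN (ahom f0 x) - ahom f0 (der dM εM x)
        ∈ lenPiece N (m + 1) ⊓ lenFilt N m :=
      Submodule.mem_inf.mpr
        ⟨Submodule.sub_mem _ (der_mem_piece _ _ _ _ hFx) (ahom_mem_piece f0 _ _ hAx), hdiff⟩
    rw [piece_disjoint_filt m] at hmem
    rw [← sub_eq_zero]
    rw [← neg_sub]
    rw [hmem, neg_zero]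

end Part9

section Part10

lemma gr_surj (dM εM : M →ₗ[ℚ] M) (dN εN pN kN : N →ₗ[ℚ] N)
    (f0 : M →ₗ[ℚ] N) (ψ : N →ₗ[ℚ] M)
    (hψd0 : ∀ w, dM (ψ w) = 0)
    (hchain : ∀ n, ∀ x ∈ lenPiece M n,
      ahom f0 (der dM εM x) = der dN εN (ahom f0 x))
    (hpf0ψ : ∀ w, pN (f0 (ψ w)) = pN w)
    (hdpN : ∀ y, dN (pN y) = 0) (hpdN : ∀ y, pN (dN y) = 0)
    (hεpN : ∀ y, εN (pN y) = pN (εN y)) (hε2N : ∀ y, εN (εN y) = y)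
    (hεdN : ∀ y, εN (dN y) + dN (εN y) = 0)
    (hdkN : ∀ y, dN (kN y) + kN (dN y) + pN y = y)
    (hεkN : ∀ y, εN (kN y) + kN (εN y) = 0) :
    ∀ n y, y ∈ lenPiece N n → der dN εN y = 0 →
      ∃ x ∈ lenPiece M n, ∃ z ∈ lenPiece N n,
        der dM εM x = 0 ∧ ahom f0 x = y + der dN εN z := by
  intro n y hyP hy0
  set x := ahom ψ y with hxdef
  have hxP : x ∈ lenPiece M n := ahom_mem_piece ψ n y hyP
  have hAx : der dM εM x = 0 := der_comp_ahom_eq_zero dM εM ψ hψd0 y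
  set c := ahom f0 x - y with hcdef
  have hcP : c ∈ lenPiece N n :=
    Submodule.sub_mem _ (ahom_mem_piece f0 n x hxP) hyP
  have hA'c : der dN εN c = 0 := by
    rw [hcdef, map_sub, ← hchain n x hxP, hAx, map_zero, hy0, sub_zero]
  have hPc : ahom pN c = 0 := by
    rw [hcdef, map_sub, hxdef, ahom_comp_apply, ahom_comp_apply]
    have hq : (pN ∘ₗ f0) ∘ₗ ψ = pN := by
      apply LinearMap.ext
      intro w
      exact hpf0ψ w
    rw [hq, sub_self]
  have hhom := homotopy_id dN εN pN kN hdpN hpdN hεpN hε2N hεdN hdkN hεkN c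
  rw [hA'c, map_zero, hPc, add_zero, add_zero] at hhom
  refine ⟨x, hxP, der kN (εN ∘ₗ pN) c, der_mem_piece _ _ _ _ hcP, hAx, ?_⟩
  rw [hhom]
  rw [hcdef]
  abel

lemma gr_inj (dM εM pM kM : M →ₗ[ℚ] M) (dN εN pN : N →ₗ[ℚ] N)
    (f0 : M →ₗ[ℚ] N) (ψ : N →ₗ[ℚ] M)
    (hchain : ∀ n, ∀ x ∈ lenPiece M n,
      ahom f0 (der dM εM x) = der dN εN (ahom f0 x))
    (hψp' : ∀ w, ψ (pN w) = ψ w)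
    (hψf0p : ∀ v, ψ (f0 (pM v)) = pM v)
    (hppM : ∀ v, pM (pM v) = pM v)
    (hpdN : ∀ y, pN (dN y) = 0)
    (hdpM : ∀ x, dM (pM x) = 0) (hpdM : ∀ x, pM (dM x) = 0)
    (hεpM : ∀ x, εM (pM x) = pM (εM x)) (hε2M : ∀ x, εM (εM x) = x)
    (hεdM : ∀ x, εM (dM x) + dM (εM x) = 0)
    (hdkM : ∀ x, dM (kM x) + kM (dM x) + pM x = x)
    (hεkM : ∀ x, εM (kM x) + kM (εM x) = 0) :
    ∀ n x, x ∈ lenPiece M n → der dM εM x = 0 →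
      (∃ y ∈ lenPiece N n, ahom f0 x = der dN εN y) →
      ∃ u ∈ lenPiece M n, x = der dM εM u := by
  intro n x hxP hx0 hex
  obtain ⟨y, hyP, hFx⟩ := hex
  set Kx := der kM (εM ∘ₗ pM) x with hKxdef
  have hKxP : Kx ∈ lenPiece M n := der_mem_piece _ _ _ _ hxP
  have hhom := homotopy_id dM εM pM kM hdpM hpdM hεpM hε2M hεdM hdkM hεkM x
  rw [hx0, map_zero, add_zero] at hhom
  -- hhom : der dM εM Kx + ahom pM x = x
  have step1 : ahom pN (ahom f0 x) = 0 := by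
    rw [hFx]
    exact ahom_comp_der_eq_zero dN εN pN hpdN y
  have step3 : ahom f0 (der dM εM Kx) = der dN εN (ahom f0 Kx) :=
    hchain n Kx hKxP
  have step4 : ahom pN (ahom f0 (ahom pM x)) = 0 := by
    have hfx : ahom f0 x = ahom f0 (der dM εM Kx) + ahom f0 (ahom pM x) := by
      rw [← map_add, hhom]
    have : ahom pN (ahom f0 (ahom pM x))
        = ahom pN (ahom f0 x) - ahom pN (ahom f0 (der dM εM Kx)) := by
      rw [hfx, map_add]
      abel
    rw [this, step1, step3, ahom_comp_der_eq_zero dN εN pN hpdN, zero_sub, neg_zero]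
  have step5 : ahom pM x = 0 := by
    have hc : ahom pM (ahom ψ (ahom pN (ahom f0 (ahom pM x))))
        = ahom ((((pM ∘ₗ ψ) ∘ₗ pN) ∘ₗ f0) ∘ₗ pM) x := by
      rw [ahom_comp_apply, ahom_comp_apply, ahom_comp_apply, ahom_comp_apply]
    have hq : (((pM ∘ₗ ψ) ∘ₗ pN) ∘ₗ f0) ∘ₗ pM = pM := by
      apply LinearMap.ext
      intro v
      show pM (ψ (pN (f0 (pM v)))) = pM v
      rw [hψp', hψf0p, hppM]
    rw [hq] at hc
    rw [← hc, step4, map_zero, map_zero]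
  refine ⟨Kx, hKxP, ?_⟩
  rw [← hhom, step5, add_zero]

end Part10

section Part11

lemma exists_psi (dM pM : M →ₗ[ℚ] M) (HM : Submodule ℚ M)
    (dN pN : N →ₗ[ℚ] N) (HN : Submodule ℚ N) (f0 : M →ₗ[ℚ] N)
    (hpHM : ∀ x, pM x ∈ HM) (hpMid : ∀ x ∈ HM, pM x = x)
    (hHMd : ∀ x ∈ HM, dM x = 0) (hHMB : ∀ x ∈ HM, (∃ u, x = dM u) → x = 0)
    (hMcyc : ∀ x, dM x = 0 → ∃ u, x - pM x = dM u)
    (hpHN : ∀ y, pN y ∈ HN) (hpNid : ∀ y ∈ HN, pN y = y)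
    (hHNd : ∀ y ∈ HN, dN y = 0)
    (hNcyc : ∀ y, dN y = 0 → ∃ u, y - pN y = dN u)
    (hpdN : ∀ y, pN (dN y) = 0)
    (hf0chain : ∀ v, dN (f0 v) = f0 (dM v))
    (hf0_surj : ∀ w, dN w = 0 → ∃ v z, dM v = 0 ∧ f0 v = w + dN z)
    (hf0_inj : ∀ v, dM v = 0 → (∃ w, f0 v = dN w) → ∃ u, v = dM u) :
    ∃ ψ : N →ₗ[ℚ] M, (∀ w, pM (ψ w) = ψ w) ∧ (∀ w, ψ (pN w) = ψ w) ∧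
      (∀ w, pN (f0 (ψ w)) = pN w) ∧ (∀ v, ψ (f0 (pM v)) = pM v) := by
  classical
  set φ : HM →ₗ[ℚ] HN :=
    LinearMap.codRestrict HN ((pN ∘ₗ f0) ∘ₗ HM.subtype) (fun x => hpHN _) with hφdef
  have hφcoe : ∀ x : HM, (φ x : N) = pN (f0 (x : M)) := fun x => rfl
  have hφinj : Function.Injective φ := by
    rw [← LinearMap.ker_eq_bot]
    rw [LinearMap.ker_eq_bot']
    intro x hx
    have hval : pN (f0 (x : M)) = 0 := by
      rw [← hφcoe, hx]
      rfl
    have hxcyc : dM (x : M) = 0 := hHMd _ x.2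
    have hfcyc : dN (f0 (x : M)) = 0 := by rw [hf0chain, hxcyc, map_zero]
    obtain ⟨u, hu⟩ := hNcyc _ hfcyc
    rw [hval, sub_zero] at hu
    obtain ⟨u', hu'⟩ := hf0_inj (x : M) hxcyc ⟨u, hu⟩
    have := hHMB _ x.2 ⟨u', hu'⟩
    exact Subtype.ext this
  have hφsurj : Function.Surjective φ := by
    rintro ⟨h', hh'⟩
    obtain ⟨v, z, hv, hfv⟩ := hf0_surj h' (hHNd _ hh')
    obtain ⟨u, hu⟩ := hMcyc v hv
    refine ⟨⟨pM v, hpHM v⟩, ?_⟩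
    apply Subtype.ext
    rw [hφcoe]
    show pN (f0 (pM v)) = h'
    have hfh : f0 (pM v) = f0 v - dN (f0 u) := by
      rw [hf0chain, ← map_sub, ← hu]
      congr 1
      abel
    rw [hfh, hfv, map_sub, map_add, hpdN, hpdN, hpNid h' hh', add_zero, sub_zero]
  set e := LinearEquiv.ofBijective φ ⟨hφinj, hφsurj⟩ with hedef
  have he_app : ∀ x : HM, e x = φ x := fun x => rfl
  set pNr : N →ₗ[ℚ] HN := LinearMap.codRestrict HN pN (fun y => hpHN y) with hpNr
  set ψ : N →ₗ[ℚ] M := HM.subtype ∘ₗ (e.symm : HN →ₗ[ℚ] HM) ∘ₗ pNr with hψdef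
  have hψapp : ∀ w, ψ w = ((e.symm (pNr w) : HM) : M) := fun w => rfl
  have hppN : ∀ w, pN (pN w) = pN w := fun w => hpNid _ (hpHN w)
  refine ⟨ψ, ?_, ?_, ?_, ?_⟩
  · intro w
    rw [hψapp]
    exact hpMid _ (e.symm (pNr w)).2
  · intro w
    rw [hψapp, hψapp]
    congr 2
    apply Subtype.ext
    show pN (pN w) = pN w
    exact hppN w
  · intro w
    rw [hψapp]
    have : pN (f0 ((e.symm (pNr w) : HM) : M)) = ((φ (e.symm (pNr w)) : HN) : N) := rfl
    rw [this, ← he_app, e.apply_symm_apply]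
    rfl
  · intro v
    rw [hψapp]
    have h1 : pNr (f0 (pM v)) = φ ⟨pM v, hpHM v⟩ := by
      apply Subtype.ext
      rfl
    rw [h1, ← he_app, e.symm_apply_apply]

end Part11

section Part12

lemma ahom_prodFn (g : M →ₗ[ℚ] N) (n : ℕ) (v : Fin n → M) :
    ahom g ((List.ofFn fun i => ι ℚ (v i)).prod)
      = (List.ofFn fun i => ι ℚ (g (v i))).prod := by
  have hfn : (⇑(ahom g) ∘ fun i => ι ℚ (v i)) = fun i => ι ℚ (g (v i)) := by
    funext i
    exact ahom_ι g (v i)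
  rw [map_list_prod, List.map_ofFn, hfn]

/-- comparison of a filtered map with its leading part, given the leading-part
hypothesis on all pure tensors -/
lemma comp_f_lemma (f : TensorAlgebra ℚ M →ₗ[ℚ] TensorAlgebra ℚ N) (f0 : M →ₗ[ℚ] N)
    (hfgr : ∀ (n : ℕ) (v : Fin n → M),
      f ((List.ofFn fun i => ι ℚ (v i)).prod)
        - (List.ofFn fun i => ι ℚ (f0 (v i))).prod ∈ lenFilt N (n - 1)) :
    ∀ n, ∀ x ∈ lenPiece M n, f x - ahom f0 x ∈ lenFilt N (n - 1) := by
  intro n x hx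
  set B := Module.Basis.ofVectorSpace ℚ M with hB
  have hSsub : lenPiece M n ≤
      Submodule.comap (f - (ahom f0).toLinearMap) (lenFilt N (n - 1)) := by
    refine le_trans (piece_le_span_words B n) ?_
    rw [Submodule.span_le]
    rintro z ⟨w, rfl⟩
    rw [SetLike.mem_coe, Submodule.mem_comap, LinearMap.sub_apply]
    have h1 := hfgr n (fun i => B (w i))
    have h2 := ahom_prodFn f0 n (fun i => B (w i))
    simp only [prodFn, AlgHom.toLinearMap_apply]
    rw [h2]
    simpa using h1
  have := hSsub hx
  rw [Submodule.mem_comap, LinearMap.sub_apply] at this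
  simpa using this

lemma one_smul_eq_zero_iff {r : ℚ} (h : r • (1 : TensorAlgebra ℚ M) = 0) : r = 0 := by
  by_contra hr
  have := congrArg (fun z => r⁻¹ • z) h
  simp only [smul_smul, inv_mul_cancel₀ hr, one_smul, smul_zero] at this
  exact one_ne_zero this

/-- the differential annihilates `1` -/
lemma D_one_eq_zero (D : TensorAlgebra ℚ M →ₗ[ℚ] TensorAlgebra ℚ M)
    (hD2 : ∀ x, D (D x) = 0)
    (hDfilt : ∀ n, ∀ x ∈ lenPiece M n, D x ∈ lenFilt M n) :
    D 1 = 0 := by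
  have h1 : D 1 ∈ lenFilt M 0 := hDfilt 0 1 one_mem_piece_zero
  rw [filt_zero, piece_zero] at h1
  obtain ⟨r, hr⟩ := Submodule.mem_one.mp h1
  rw [Algebra.algebraMap_eq_smul_one] at hr
  have h2 : (0 : TensorAlgebra ℚ M) = r • r • (1 : TensorAlgebra ℚ M) := by
    calc (0 : TensorAlgebra ℚ M) = D (D 1) := (hD2 1).symm
    _ = D (r • 1) := by rw [hr]
    _ = r • D 1 := by rw [map_smul]
    _ = r • r • 1 := by rw [← hr]
  rw [smul_smul] at h2
  have h4 : r * r = 0 := one_smul_eq_zero_iff h2.symm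
  have h5 : r = 0 := by
    rcases mul_eq_zero.mp h4 with h | h <;> exact h
  rw [← hr, h5, zero_smul]

lemma mem_piece_zero_iff {x : TensorAlgebra ℚ M} (hx : x ∈ lenFilt M 0) :
    ∃ r : ℚ, x = r • 1 := by
  rw [filt_zero, piece_zero] at hx
  obtain ⟨r, hr⟩ := Submodule.mem_one.mp hx
  exact ⟨r, by rw [← hr, Algebra.algebraMap_eq_smul_one]⟩

end Part12

end TCQI

open TCQI

/-- Let `(T^c(V), D)` and `(T^c(W), D')` be differential graded tensor coalgebras
whose (coderivation) differentials have components decreasing the word length, with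
linear parts `d_V`, `d_W` preserving `V` resp. `W`, and let
`f : T^c(V) → T^c(W)` be a morphism of differential graded coalgebras written
`f = f₀ + f₁ + ⋯` with `fᵢ((T^c)^r(V)) ⊆ (T^c)^{r-i}(W)`.  If
`f₀ : (V, d_V) → (W, d_W)` is a quasi-isomorphism and `V`, `W` are graded vector
spaces over `ℚ`, then `f` is a quasi-isomorphism.

Word-length pieces are realised inside the tensor algebras, `lenFilt` is the
word-length filtration, and quasi-isomorphisms are expressed by surjectivity and
injectivity of the induced map on homology classes. -/
theorem tensor_coalgebra_morphism_quasi_iso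
    (V W : Type) [AddCommGroup V] [Module ℚ V] [AddCommGroup W] [Module ℚ W]
    -- homological gradings
    (gV : ℤ → Submodule ℚ V) (hgV : (⨆ i : ℤ, gV i) = ⊤)
    (gW : ℤ → Submodule ℚ W) (hgW : (⨆ i : ℤ, gW i) = ⊤)
    -- the linear parts of the differentials
    (dV : V →ₗ[ℚ] V) (hdV2 : dV ∘ₗ dV = 0)
    (dW : W →ₗ[ℚ] W) (hdW2 : dW ∘ₗ dW = 0)
    (hdVg : ∀ (i : ℤ), ∀ v ∈ gV i, dV v ∈ gV (i - 1))
    (hdWg : ∀ (i : ℤ), ∀ w ∈ gW i, dW w ∈ gW (i - 1))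
    -- the linear component `f₀` of `f`, a quasi-isomorphism
    (f0 : V →ₗ[ℚ] W) (hf0chain : dW ∘ₗ f0 = f0 ∘ₗ dV)
    (hf0g : ∀ (i : ℤ), ∀ v ∈ gV i, f0 v ∈ gW i)
    (hf0_surj : ∀ w : W, dW w = 0 → ∃ v z, dV v = 0 ∧ f0 v = w + dW z)
    (hf0_inj : ∀ v : V, dV v = 0 → (∃ w, f0 v = dW w) → ∃ u, v = dV u)
    -- the differentials of the tensor coalgebras
    (D : TensorAlgebra ℚ V →ₗ[ℚ] TensorAlgebra ℚ V) (hD2 : D ∘ₗ D = 0)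
    (D' : TensorAlgebra ℚ W →ₗ[ℚ] TensorAlgebra ℚ W) (hD'2 : D' ∘ₗ D' = 0)
    (hDfilt : ∀ n : ℕ, ∀ x ∈ lenPiece V n, D x ∈ lenFilt V n)
    (hD'filt : ∀ n : ℕ, ∀ y ∈ lenPiece W n, D' y ∈ lenFilt W n)
    (hD1 : ∀ v : V, D (TensorAlgebra.ι ℚ v) = TensorAlgebra.ι ℚ (dV v))
    (hD'1 : ∀ w : W, D' (TensorAlgebra.ι ℚ w) = TensorAlgebra.ι ℚ (dW w))
    -- the word-length preserving component of `D` on `V^{⊗n}` is the tensor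
    -- extension of `d_V` (with the Koszul signs of the grading):
    (hDgr : ∀ (n : ℕ) (v : Fin n → V) (deg : Fin n → ℤ),
      (∀ i, v i ∈ gV (deg i)) →
      D ((List.ofFn fun i => TensorAlgebra.ι ℚ (v i)).prod)
        - ∑ i : Fin n,
            ((-1 : ℚ) ^ (∑ j ∈ Finset.univ.filter (fun j => j < i), deg j).natAbs) •
              (List.ofFn fun j =>
                TensorAlgebra.ι ℚ (if j = i then dV (v j) else v j)).prod
        ∈ lenFilt V (n - 1))
    (hD'gr : ∀ (n : ℕ) (w : Fin n → W) (deg : Fin n → ℤ),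
      (∀ i, w i ∈ gW (deg i)) →
      D' ((List.ofFn fun i => TensorAlgebra.ι ℚ (w i)).prod)
        - ∑ i : Fin n,
            ((-1 : ℚ) ^ (∑ j ∈ Finset.univ.filter (fun j => j < i), deg j).natAbs) •
              (List.ofFn fun j =>
                TensorAlgebra.ι ℚ (if j = i then dW (w j) else w j)).prod
        ∈ lenFilt W (n - 1))
    -- the coalgebra morphism `f`
    (f : TensorAlgebra ℚ V →ₗ[ℚ] TensorAlgebra ℚ W)
    (hfchain : D' ∘ₗ f = f ∘ₗ D)
    (hffilt : ∀ n : ℕ, ∀ x ∈ lenPiece V n, f x ∈ lenFilt W n)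
    (hfone : f 1 = 1)
    (hf1 : ∀ v : V, f (TensorAlgebra.ι ℚ v) = TensorAlgebra.ι ℚ (f0 v))
    -- the word-length preserving component of `f` is `f₀^{⊗n}`:
    (hfgr : ∀ (n : ℕ) (v : Fin n → V),
      f ((List.ofFn fun i => TensorAlgebra.ι ℚ (v i)).prod)
        - (List.ofFn fun i => TensorAlgebra.ι ℚ (f0 (v i))).prod
        ∈ lenFilt W (n - 1)) :
    (∀ y : TensorAlgebra ℚ W, D' y = 0 →
      ∃ x z, D x = 0 ∧ f x = y + D' z) ∧
    (∀ x : TensorAlgebra ℚ V, D x = 0 → (∃ y, f x = D' y) → ∃ u, x = D u) := by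
  classical
  -- pointwise versions of composition identities
  have hdV2pt : ∀ v, dV (dV v) = 0 := fun v => by
    have := LinearMap.ext_iff.mp hdV2 v; simpa using this
  have hdW2pt : ∀ v, dW (dW v) = 0 := fun v => by
    have := LinearMap.ext_iff.mp hdW2 v; simpa using this
  have hD2pt : ∀ x, D (D x) = 0 := fun x => by
    have := LinearMap.ext_iff.mp hD2 x; simpa using this
  have hD'2pt : ∀ x, D' (D' x) = 0 := fun x => by
    have := LinearMap.ext_iff.mp hD'2 x; simpa using this
  have hfchainpt : ∀ x, D' (f x) = f (D x) := fun x => by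
    have := LinearMap.ext_iff.mp hfchain x; simpa using this
  have hf0chainpt : ∀ v, dW (f0 v) = f0 (dV v) := fun v => by
    have := LinearMap.ext_iff.mp hf0chain v; simpa using this
  -- the two side packages
  obtain ⟨εV, pV, kV, HV, hε2V, hεdV, hcompV, hdpV, hpdV, hppV, hεpV, hdkV, hεkV,
      hpHV, hpVid, hHVd, hHVB, hVcyc⟩ :=
    exists_side gV hgV dV hdV2pt D hD2pt hDfilt hDgr
  obtain ⟨εW, pW, kW, HW, hε2W, hεdW, hcompW, hdpW, hpdW, hppW, hεpW, hdkW, hεkW,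
      hpHW, hpWid, hHWd, hHWB, hWcyc⟩ :=
    exists_side gW hgW dW hdW2pt D' hD'2pt hD'filt hD'gr
  -- the comparison of `f` with its leading part, and the graded chain condition
  have hcompf := comp_f_lemma f f0 hfgr
  have hchain := chain_comp dV εV dW εW f0 D D' f hD'filt hcompV hcompW hcompf
    hffilt hfchainpt
  -- the homotopy inverse of `f0` on homology
  obtain ⟨ψ, hpψ, hψp', hpf0ψ, hψf0p⟩ :=
    exists_psi dV pV HV dW pW HW f0 hpHV hpVid hHVd hHVB hVcyc hpHW hpWid hHWd
      hWcyc hpdW hf0chainpt hf0_surj hf0_inj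
  have hψd0 : ∀ w, dV (ψ w) = 0 := by
    intro w
    rw [← hpψ w]
    exact hdpV _
  have grS := gr_surj dV εV dW εW pW kW f0 ψ hψd0 hchain hpf0ψ hdpW hpdW hεpW
    hε2W hεdW hdkW hεkW
  have grI := gr_inj dV εV pV kV dW εW pW f0 ψ hchain hψp' hψf0p hppV hpdW hdpV
    hpdV hεpV hε2V hεdV hdkV hεkV
  have hDone : D 1 = 0 := D_one_eq_zero D hD2pt hDfilt
  have hD'one : D' 1 = 0 := D_one_eq_zero D' hD'2pt hD'filt
  -- acyclicity of the cone, by induction along the filtration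
  have key : ∀ q : ℕ, ∀ x y, x ∈ lenFilt V q → y ∈ lenFilt W q →
      D x = 0 → f x + D' y = 0 →
      ∃ a b, D a = -x ∧ f a + D' b = y := by
    intro q
    induction q with
    | zero =>
      intro x y hx hy hDx hfxy
      obtain ⟨r, hr⟩ := mem_piece_zero_iff hx
      obtain ⟨s, hs⟩ := mem_piece_zero_iff hy
      have hfx : f x = r • 1 := by rw [hr, map_smul, hfone]
      have hD'y : D' y = 0 := by rw [hs, map_smul, hD'one, smul_zero]
      rw [hfx, hD'y, add_zero] at hfxy
      have hr0 : r = 0 := one_smul_eq_zero_iff hfxy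
      refine ⟨s • 1, 0, ?_, ?_⟩
      · rw [map_smul, hDone, smul_zero, hr, hr0, zero_smul, neg_zero]
      · rw [map_smul, hfone, map_zero, add_zero, hs]
    | succ q ih =>
      intro x y hx hy hDx hfxy
      rw [filt_succ] at hx hy
      obtain ⟨x', hx', ξ, hξ, hxsum⟩ := Submodule.mem_sup.mp hx
      obtain ⟨y', hy', η, hη, hysum⟩ := Submodule.mem_sup.mp hy
      -- ξ is a cycle for the graded differential
      have hAξ : der dV εV ξ = 0 := by
        have hDξ : D x' + D ξ = 0 := by rw [← map_add, hxsum, hDx]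
        have hmemF : der dV εV ξ ∈ lenFilt V q := by
          have h1 : D ξ - der dV εV ξ ∈ lenFilt V q := hcompV (q+1) ξ hξ
          have h2 : D x' ∈ lenFilt V q := filt_stable hDfilt q x' hx'
          have heq : der dV εV ξ
              = (0 - (D ξ - der dV εV ξ) - D x') + (D x' + D ξ) := by abel
          rw [heq, hDξ, add_zero]
          exact Submodule.sub_mem _
            (Submodule.sub_mem _ (Submodule.zero_mem _) h1) h2
        have h3 : der dV εV ξ ∈ lenPiece V (q+1) ⊓ lenFilt V q :=
          Submodule.mem_inf.mpr ⟨der_mem_piece _ _ _ ξ hξ, hmemF⟩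
        rw [piece_disjoint_filt q] at h3
        exact h3
      -- the graded cycle condition in the second coordinate
      have hfξ : f ξ + D' η = -(f x' + D' y') := by
        rw [eq_neg_iff_add_eq_zero]
        have e1 : f x' + f ξ = f x := by rw [← map_add, hxsum]
        have e2 : D' y' + D' η = D' y := by rw [← map_add, hysum]
        have h0 : f ξ + D' η + (f x' + D' y')
            = (f x' + f ξ) + (D' y' + D' η) := by abel
        rw [h0, e1, e2, hfxy]
      have hBξη : ahom f0 ξ + der dW εW η = 0 := by
        have h1 : f ξ - ahom f0 ξ ∈ lenFilt W q := hcompf (q+1) ξ hξ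
        have h2 : D' η - der dW εW η ∈ lenFilt W q := hcompW (q+1) η hη
        have h3 : f x' ∈ lenFilt W q := filt_stable' hffilt q x' hx'
        have h4 : D' y' ∈ lenFilt W q := filt_stable hD'filt q y' hy'
        have h5 : (f ξ + D' η) + (f x' + D' y') = 0 := by
          rw [hfξ]
          exact neg_add_cancel _
        have hmemF : ahom f0 ξ + der dW εW η ∈ lenFilt W q := by
          have heq : ahom f0 ξ + der dW εW η
              = ((ahom f0 ξ - f ξ) + (der dW εW η - D' η) - f x' - D' y')
                + ((f ξ + D' η) + (f x' + D' y')) := by abel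
          rw [heq, h5, add_zero]
          refine Submodule.sub_mem _ (Submodule.sub_mem _
            (Submodule.add_mem _ ?_ ?_) h3) h4
          · rw [← neg_sub (f ξ) (ahom f0 ξ)]
            exact Submodule.neg_mem _ h1
          · rw [← neg_sub (D' η) (der dW εW η)]
            exact Submodule.neg_mem _ h2
        have h6 : ahom f0 ξ + der dW εW η
            ∈ lenPiece W (q+1) ⊓ lenFilt W q :=
          Submodule.mem_inf.mpr
            ⟨Submodule.add_mem _ (ahom_mem_piece f0 _ ξ hξ)
              (der_mem_piece _ _ _ η hη), hmemF⟩
        rw [piece_disjoint_filt q] at h6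
        exact h6
      -- the graded five-lemma chase
      have hFξ : ahom f0 ξ = der dW εW (-η) := by
        rw [map_neg]
        exact eq_neg_of_add_eq_zero_left hBξη
      obtain ⟨u, huP, huξ⟩ := grI (q+1) ξ hξ hAξ
        ⟨-η, Submodule.neg_mem _ hη, hFξ⟩
      set c' := η + ahom f0 u with hc'def
      have hc'P : c' ∈ lenPiece W (q+1) :=
        Submodule.add_mem _ hη (ahom_mem_piece f0 _ u huP)
      have hchainu : ahom f0 (der dV εV u) = der dW εW (ahom f0 u) :=
        hchain (q+1) u huP
      have hA'c' : der dW εW c' = 0 := by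
        rw [hc'def, map_add, ← hchainu, ← huξ,
          add_comm (der dW εW η) (ahom f0 ξ)]
        exact hBξη
      obtain ⟨a', ha'P, z', hz'P, hA'a', hFa'⟩ := grS (q+1) c' hc'P hA'c'
      set w₁ := a' - u with hw₁def
      set w₂ := -z' with hw₂def
      have hw₁P : w₁ ∈ lenPiece V (q+1) := Submodule.sub_mem _ ha'P huP
      have hw₂P : w₂ ∈ lenPiece W (q+1) := Submodule.neg_mem _ hz'P
      have hderw₁ : der dV εV w₁ = -ξ := by
        rw [hw₁def, map_sub, hA'a', ← huξ, zero_sub]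
      have hgr2 : ahom f0 w₁ + der dW εW w₂ = η := by
        rw [hw₁def, hw₂def, map_sub, map_neg, hFa', hc'def]
        abel
      -- subtract the graded boundary and use the inductive hypothesis
      set x₂ := x + D w₁ with hx₂def
      set y₂ := y - f w₁ - D' w₂ with hy₂def
      have hx₂F : x₂ ∈ lenFilt V q := by
        have h1 : D w₁ - der dV εV w₁ ∈ lenFilt V q := hcompV (q+1) w₁ hw₁P
        have heq : x₂ = x' + (D w₁ - der dV εV w₁) := by
          rw [hx₂def, ← hxsum, hderw₁]
          abel
        rw [heq]
        exact Submodule.add_mem _ hx' h1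
      have hy₂F : y₂ ∈ lenFilt W q := by
        have h1 : f w₁ - ahom f0 w₁ ∈ lenFilt W q := hcompf (q+1) w₁ hw₁P
        have h2 : D' w₂ - der dW εW w₂ ∈ lenFilt W q := hcompW (q+1) w₂ hw₂P
        have heq : y₂ = y' - (f w₁ - ahom f0 w₁) - (D' w₂ - der dW εW w₂) := by
          rw [hy₂def, ← hysum, ← hgr2]
          abel
        rw [heq]
        exact Submodule.sub_mem _ (Submodule.sub_mem _ hy' h1) h2
      have hDx₂ : D x₂ = 0 := by
        rw [hx₂def, map_add, hDx, hD2pt, zero_add]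
      have hfxy₂ : f x₂ + D' y₂ = 0 := by
        have hc1 : f x₂ + D' y₂
            = (f x + D' y) + (f (D w₁) - D' (f w₁)) - D' (D' w₂) := by
          simp only [hx₂def, hy₂def, map_add, map_sub]
          abel
        rw [hc1, hfxy, hfchainpt w₁, hD'2pt w₂]
        simp
      obtain ⟨a₂, b₂, hDa₂, hfb₂⟩ := ih x₂ y₂ hx₂F hy₂F hDx₂ hfxy₂
      refine ⟨a₂ + w₁, b₂ + w₂, ?_, ?_⟩
      · rw [map_add, hDa₂, hx₂def]
        abel
      · rw [map_add, map_add]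
        have hc2 : f a₂ + f w₁ + (D' b₂ + D' w₂)
            = (f a₂ + D' b₂) + f w₁ + D' w₂ := by abel
        rw [hc2, hfb₂, hy₂def]
        abel
  -- conclusions
  constructor
  · intro y hy
    obtain ⟨q, hq⟩ := exists_mem_filt y
    obtain ⟨a, b, hDa, hfab⟩ := key q 0 y (Submodule.zero_mem _) hq
      (by rw [map_zero]) (by rw [map_zero, zero_add, hy])
    refine ⟨a, -b, by simpa using hDa, ?_⟩
    rw [map_neg, ← hfab]
    abel
  · intro x hDx hex
    obtain ⟨y, hfx⟩ := hex
    obtain ⟨q₁, hq₁⟩ := exists_mem_filt x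
    obtain ⟨q₂, hq₂⟩ := exists_mem_filt y
    obtain ⟨a, b, hDa, hfab⟩ := key (max q₁ q₂) x (-y)
      (filt_mono (le_max_left q₁ q₂) hq₁)
      (Submodule.neg_mem _ (filt_mono (le_max_right q₁ q₂) hq₂))
      hDx
      (by rw [map_neg, hfx]; abel)
    refine ⟨-a, ?_⟩
    rw [map_neg, hDa, neg_neg]
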